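/- arXiv:2308.05706 — 6 statements merged into one kernel-verified Lean document; each statement's English description precedes it below -/
import Mathlib

section
/- Let k be a field, H a Hopf algebra over k, and B a right coideal subalgebra of H such that B = {h ∈ H : h ⊗ 1 − 1 ⊗ h ∈ J_B}. Then B = H^{co H/(HB⁺)}, i.e. B equals the set of x ∈ H with Σ π(x₍₁₎) ⊗ x₍₂₎ = π(1) ⊗ x in (H/HB⁺) ⊗ H, where π : H → H/HB⁺ is the quotient map. -/
open TensorProduct

noncomputable section

namespace HopfGalois

variable (k : Type*) (H : Type*) [Field k] [Ring H] [HopfAlgebra k H]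

/-- The linear map `H ⊗ H → H`, `x ⊗ y ↦ ε(x) • y`. -/
def epsTensorId : H ⊗[k] H →ₗ[k] H :=
  (TensorProduct.lid k H).toLinearMap ∘ₗ
    TensorProduct.map (Coalgebra.counit : H →ₗ[k] k) (LinearMap.id : H →ₗ[k] H)

/-- The linear map `H ⊗ H → H`, `x ⊗ y ↦ ε(y) • x`. -/
def idTensorEps : H ⊗[k] H →ₗ[k] H :=
  (TensorProduct.rid k H).toLinearMap ∘ₗ
    TensorProduct.map (LinearMap.id : H →ₗ[k] H) (Coalgebra.counit : H →ₗ[k] k)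

/-- `x ⊗ y ↦ Σ x₍₁₎ ⊗ π_I(x₍₂₎) ⊗ y`. -/
def cotensorL (I : Submodule k H) : H ⊗[k] H →ₗ[k] H ⊗[k] ((H ⧸ I) ⊗[k] H) :=
  TensorProduct.map (LinearMap.id : H →ₗ[k] H)
      (TensorProduct.map I.mkQ (LinearMap.id : H →ₗ[k] H))
    ∘ₗ (TensorProduct.assoc k H H H).toLinearMap
    ∘ₗ TensorProduct.map (Coalgebra.comul : H →ₗ[k] H ⊗[k] H) (LinearMap.id : H →ₗ[k] H)

/-- `x ⊗ y ↦ Σ x ⊗ π_I(y₍₁₎) ⊗ y₍₂₎`. -/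
def cotensorR (I : Submodule k H) : H ⊗[k] H →ₗ[k] H ⊗[k] ((H ⧸ I) ⊗[k] H) :=
  TensorProduct.map (LinearMap.id : H →ₗ[k] H)
    (TensorProduct.map I.mkQ (LinearMap.id : H →ₗ[k] H)
      ∘ₗ (Coalgebra.comul : H →ₗ[k] H ⊗[k] H))

/-- The cotensor product `H □^{H/I} H` as a subspace of `H ⊗ H`. -/
def cotensor (I : Submodule k H) : Submodule k (H ⊗[k] H) :=
  LinearMap.ker (cotensorL k H I - cotensorR k H I)

/-- The subspace of coinvariants `H^{co H/I}`:
`{x ∈ H : Σ π_I(x₍₁₎) ⊗ x₍₂₎ = π_I(1) ⊗ x}`. -/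
def coinv (I : Submodule k H) : Submodule k H :=
  LinearMap.ker
    ((TensorProduct.map I.mkQ (LinearMap.id : H →ₗ[k] H)
        ∘ₗ (Coalgebra.comul : H →ₗ[k] H ⊗[k] H))
      - TensorProduct.mk k (H ⧸ I) H (I.mkQ 1))

/-- A left ideal coideal: a left ideal `I` with `ε(I) = 0` and `Δ(I) ⊆ I ⊗ H + H ⊗ I`. -/
structure IsLeftIdealCoideal (I : Submodule k H) : Prop where
  mul_mem_left : ∀ (h x : H), x ∈ I → h * x ∈ I
  counit_zero : ∀ x ∈ I, (Coalgebra.counit : H →ₗ[k] k) x = 0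
  comul_mem : ∀ x ∈ I, (Coalgebra.comul : H →ₗ[k] H ⊗[k] H) x ∈
    LinearMap.range (TensorProduct.map I.subtype (LinearMap.id : H →ₗ[k] H)) ⊔
      LinearMap.range (TensorProduct.map (LinearMap.id : H →ₗ[k] H) I.subtype)

/-- A right coideal subalgebra: a subalgebra `B` with `Δ(B) ⊆ B ⊗ H`. -/
def IsRightCoidealSubalgebra (B : Subalgebra k H) : Prop :=
  ∀ b ∈ B, (Coalgebra.comul : H →ₗ[k] H ⊗[k] H) b ∈
    LinearMap.range
      (TensorProduct.map (Subalgebra.toSubmodule B).subtype (LinearMap.id : H →ₗ[k] H))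

/-- The left ideal of `H` generated by a subset `S`, as a `k`-subspace of `H`. -/
def leftIdealGen (S : Set H) : Submodule k H :=
  Submodule.span k {z : H | ∃ h : H, ∃ b ∈ S, z = h * b}

/-- `S⁺ = S ∩ ker ε`. -/
def plusPart (S : Set H) : Set H :=
  {b ∈ S | (Coalgebra.counit : H →ₗ[k] k) b = 0}

/-- `H·S⁺`, the left ideal of `H` generated by `S ∩ ker ε`. -/
def HSplus (S : Set H) : Submodule k H :=
  leftIdealGen k H (plusPart k H S)

/-- The subspace `J_B ⊆ H ⊗ H` spanned by `{xb ⊗ y − x ⊗ by : x, y ∈ H, b ∈ B}`,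
so that `H ⊗_B H = (H ⊗ H)/J_B`. -/
def JB (S : Set H) : Submodule k (H ⊗[k] H) :=
  Submodule.span k
    {z : H ⊗[k] H | ∃ x y : H, ∃ b ∈ S, z = (x * b) ⊗ₜ[k] y - x ⊗ₜ[k] (b * y)}

/-- `B` is the equalizer of the two canonical maps `H → H ⊗_B H`. -/
def equalizerCond (S : Set H) : Prop :=
  {h : H | h ⊗ₜ[k] (1 : H) - (1 : H) ⊗ₜ[k] h ∈ JB k H S} = S

/-- `H/I` is the coequalizer of `ε ⊗ id` and `id ⊗ ε` restricted to `H □^{H/I} H`, i.e.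
`I` is the subspace spanned by `{Σ ε(xᵢ)yᵢ − Σ xᵢε(yᵢ) : Σ xᵢ ⊗ yᵢ ∈ H □^{H/I} H}`. -/
def coequalizerCond (I : Submodule k H) : Prop :=
  I = Submodule.map (epsTensorId k H - idTensorEps k H) (cotensor k H I)

/-! ### Auxiliary lemmas -/

section Aux

open Coalgebra LinearMap

variable {k H}

local notation "ε" => (Coalgebra.counit : H →ₗ[k] k)
local notation "Δ" => (Coalgebra.comul : H →ₗ[k] H ⊗[k] H)
local notation "𝒮" => (HopfAlgebra.antipode k : H →ₗ[k] H)
local notation "μ" => (LinearMap.mul' k H)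

lemma antipode_one' : (𝒮) (1:H) = 1 := by
  have h := HopfAlgebra.mul_antipode_rTensor_comul_apply (R := k) (A := H) 1
  rw [Bialgebra.comul_one, Algebra.TensorProduct.one_def] at h
  simpa using h

lemma sum_counit_smul {a : H} (r : Coalgebra.Repr k a (H × H)) :
    ∑ i ∈ r.index, ε (r.left i) • r.right i = a := by
  have h := Coalgebra.sum_counit_tmul_eq r
  have h2 : (TensorProduct.lid k H) (∑ i ∈ r.index, ε (r.left i) ⊗ₜ[k] r.right i)
      = ∑ i ∈ r.index, ε (r.left i) • r.right i := by
    rw [map_sum]; simp only [lid_tmul]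
  rw [h] at h2; simpa using h2.symm

lemma sum_smul_counit {a : H} (r : Coalgebra.Repr k a (H × H)) :
    ∑ i ∈ r.index, ε (r.right i) • r.left i = a := by
  have h := Coalgebra.sum_tmul_counit_eq r
  have h2 : (TensorProduct.rid k H) (∑ i ∈ r.index, r.left i ⊗ₜ[k] ε (r.right i))
      = ∑ i ∈ r.index, ε (r.right i) • r.left i := by
    rw [map_sum]; simp only [rid_tmul]
  rw [h] at h2; simpa using h2.symm

/-- `p ⊗ c ↦ p * (S (z*c) * h)` -/
def theta (z h : H) : H ⊗[k] H →ₗ[k] H :=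
  μ ∘ₗ (LinearMap.lTensor H (LinearMap.mulRight k h ∘ₗ 𝒮 ∘ₗ LinearMap.mulLeft k z))

lemma theta_tmul (z h p c : H) : theta z h (p ⊗ₜ[k] c) = p * ((𝒮) (z * c) * h) := by
  simp [theta]

lemma mu_lTensor_mulRight (h : H) (t : H ⊗[k] H) :
    μ (LinearMap.lTensor H (LinearMap.mulRight k h) t) = μ t * h := by
  induction t with
  | zero => simp
  | tmul p c => simp [mul_assoc]
  | add u v hu hv => simp [map_add, add_mul, hu, hv]

/-- `p ⊗ w ↦ Σ_(b) (p b₁) * (S(w b₂) h)` -/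
def auxX (b h : H) : H ⊗[k] H →ₗ[k] H :=
  μ ∘ₗ (LinearMap.lTensor H (LinearMap.mulRight k h ∘ₗ 𝒮))
    ∘ₗ LinearMap.mulRight k (Δ b)

lemma auxX_comul (b h w : H) : auxX b h (Δ w) = (ε w * ε b) • h := by
  have : (LinearMap.mulRight k (Δ b)) (Δ w) = Δ (w * b) := by
    simp [LinearMap.mulRight_apply, Bialgebra.comul_mul]
  rw [auxX, LinearMap.comp_apply, LinearMap.comp_apply, this,
    LinearMap.lTensor_comp, LinearMap.comp_apply, mu_lTensor_mulRight,
    HopfAlgebra.mul_antipode_lTensor_comul_apply, Bialgebra.counit_mul,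
    Algebra.smul_def]

lemma auxX_tmul (b h p w : H) (rb : Coalgebra.Repr k b (H × H)) :
    auxX b h (p ⊗ₜ[k] w)
      = ∑ m ∈ rb.index, (p * rb.left m) * ((𝒮) (w * rb.right m) * h) := by
  rw [auxX, LinearMap.comp_apply, LinearMap.comp_apply, LinearMap.mulRight_apply,
    ← rb.eq, Finset.mul_sum]
  rw [map_sum, map_sum]
  apply Finset.sum_congr rfl
  intro m _
  rw [Algebra.TensorProduct.tmul_mul_tmul]
  simp

/-- The key identity: `Σ_(b) b₁ * (S(z b₂) * h) = ε(b) • (S(z) * h)`. -/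
lemma theta_comul (z h b : H) : theta z h (Δ b) = ε b • ((𝒮) z * h) := by
  classical
  set rb := ℛ k b with hrb
  set rz := ℛ k z with hrz
  set rz1 : (i : H × H) → Coalgebra.Repr k (rz.left i) (H × H) := fun i => ℛ k (rz.left i) with hrz1
  set rz2 : (i : H × H) → Coalgebra.Repr k (rz.right i) (H × H) := fun i => ℛ k (rz.right i) with hrz2
  have key := Coalgebra.sum_tmul_tmul_eq rz rz1 rz2
  set N : H ⊗[k] (H ⊗[k] H) →ₗ[k] H := μ ∘ₗ TensorProduct.map 𝒮 (auxX b h) with hN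
  have keyN := congrArg N key
  rw [map_sum, map_sum] at keyN
  simp only [map_sum, hN, LinearMap.comp_apply, TensorProduct.map_tmul,
    LinearMap.mul'_apply] at keyN
  have hR : ∑ i ∈ rz.index, ∑ j ∈ (rz2 i).index,
      (𝒮) (rz.left i) * auxX b h ((rz2 i).left j ⊗ₜ[k] (rz2 i).right j)
      = ε b • ((𝒮) z * h) := by
    have h1 : ∀ i ∈ rz.index, ∑ j ∈ (rz2 i).index,
        (𝒮) (rz.left i) * auxX b h ((rz2 i).left j ⊗ₜ[k] (rz2 i).right j)
        = ε b • (ε (rz.right i) • ((𝒮) (rz.left i) * h)) := by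
      intro i _
      rw [← Finset.mul_sum, ← map_sum, (rz2 i).eq, auxX_comul,
        mul_smul_comm, mul_comm (ε (rz.right i)) (ε b), mul_smul]
    rw [Finset.sum_congr rfl h1, ← Finset.smul_sum]
    congr 1
    have h2 : ∀ i ∈ rz.index, ε (rz.right i) • ((𝒮) (rz.left i) * h)
        = (ε (rz.right i) • (𝒮) (rz.left i)) * h := by
      intro i _; rw [smul_mul_assoc]
    rw [Finset.sum_congr rfl h2, ← Finset.sum_mul]
    congr 1
    have h3 : ∀ i ∈ rz.index, ε (rz.right i) • (𝒮) (rz.left i)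
        = (𝒮) (ε (rz.right i) • rz.left i) := by intro i _; rw [map_smul]
    rw [Finset.sum_congr rfl h3, ← map_sum, sum_smul_counit rz]
  have hL : ∑ i ∈ rz.index, ∑ j ∈ (rz1 i).index,
      (𝒮) ((rz1 i).left j) * auxX b h ((rz1 i).right j ⊗ₜ[k] rz.right i)
      = theta z h (Δ b) := by
    have h1 : ∀ i ∈ rz.index, ∑ j ∈ (rz1 i).index,
        (𝒮) ((rz1 i).left j) * auxX b h ((rz1 i).right j ⊗ₜ[k] rz.right i)
        = ∑ m ∈ rb.index, ε (rz.left i) •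
            (rb.left m * ((𝒮) (rz.right i * rb.right m) * h)) := by
      intro i _
      have e1 : ∀ j ∈ (rz1 i).index,
          (𝒮) ((rz1 i).left j) * auxX b h ((rz1 i).right j ⊗ₜ[k] rz.right i)
          = ∑ m ∈ rb.index, ((𝒮) ((rz1 i).left j) * (rz1 i).right j) *
              (rb.left m * ((𝒮) (rz.right i * rb.right m) * h)) := by
        intro j _
        rw [auxX_tmul _ _ _ _ rb, Finset.mul_sum]
        apply Finset.sum_congr rfl
        intro m _
        rw [mul_assoc, mul_assoc]
      rw [Finset.sum_congr rfl e1, Finset.sum_comm]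
      apply Finset.sum_congr rfl
      intro m _
      rw [← Finset.sum_mul, HopfAlgebra.sum_antipode_mul_eq_algebraMap_counit (rz1 i), ← Algebra.smul_def]
    rw [Finset.sum_congr rfl h1, Finset.sum_comm]
    have h2 : ∀ m ∈ rb.index, ∑ i ∈ rz.index,
        ε (rz.left i) • (rb.left m * ((𝒮) (rz.right i * rb.right m) * h))
        = rb.left m * ((𝒮) (z * rb.right m) * h) := by
      intro m _
      set Y : H →ₗ[k] H := LinearMap.mulLeft k (rb.left m) ∘ₗ LinearMap.mulRight k h
        ∘ₗ 𝒮 ∘ₗ LinearMap.mulRight k (rb.right m) with hY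
      have hYa : ∀ w : H, Y w = rb.left m * ((𝒮) (w * rb.right m) * h) := by
        intro w; simp [hY]
      rw [Finset.sum_congr rfl (fun i _ => by rw [← hYa, ← map_smul]), ← map_sum,
        sum_counit_smul rz, hYa]
    rw [Finset.sum_congr rfl h2, ← rb.eq, map_sum]
    apply Finset.sum_congr rfl
    intro m _
    rw [theta_tmul]
  rw [← hL, keyN, hR]

/-- `u ⊗ v ↦ Σ u₁ ⊗ S(u₂) v`. -/
def galInv : H ⊗[k] H →ₗ[k] H ⊗[k] H :=
  (LinearMap.lTensor H μ) ∘ₗ (TensorProduct.assoc k H H H).toLinearMap ∘ₗ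
    LinearMap.rTensor H ((LinearMap.lTensor H 𝒮) ∘ₗ Δ)

lemma galInv_aux (h : H) (w : H ⊗[k] H) :
    (LinearMap.lTensor H μ) ((TensorProduct.assoc k H H H).toLinearMap
        ((LinearMap.lTensor H 𝒮 w) ⊗ₜ[k] h))
      = LinearMap.lTensor H (LinearMap.mulRight k h ∘ₗ 𝒮) w := by
  induction w with
  | zero => rw [map_zero, zero_tmul, map_zero, map_zero, map_zero]
  | tmul u v =>
      simp only [LinearMap.lTensor_tmul, LinearEquiv.coe_coe, TensorProduct.assoc_tmul,
        LinearMap.comp_apply, LinearMap.mulRight_apply, LinearMap.mul'_apply]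
  | add u v hu hv =>
      rw [map_add, add_tmul, map_add, map_add, map_add, hu, hv]

lemma galInv_tmul (y h : H) :
    galInv (y ⊗ₜ[k] h) = LinearMap.lTensor H (LinearMap.mulRight k h ∘ₗ 𝒮) (Δ y) := by
  rw [galInv]
  simp only [LinearMap.comp_apply, LinearMap.rTensor_tmul]
  exact galInv_aux h (Δ y)

lemma galInv_comul (x : H) : galInv (Δ x) = x ⊗ₜ[k] (1 : H) := by
  classical
  set rx := ℛ k x with hrx
  set rx1 : (i : H × H) → Coalgebra.Repr k (rx.left i) (H × H) := fun i => ℛ k (rx.left i) with hrx1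
  set rx2 : (i : H × H) → Coalgebra.Repr k (rx.right i) (H × H) := fun i => ℛ k (rx.right i) with hrx2
  have key := Coalgebra.sum_tmul_tmul_eq rx rx1 rx2
  set K : H ⊗[k] (H ⊗[k] H) →ₗ[k] H ⊗[k] H :=
    LinearMap.lTensor H (μ ∘ₗ LinearMap.rTensor H 𝒮) with hK
  have keyK := congrArg K key
  simp only [map_sum, hK, LinearMap.lTensor_tmul, LinearMap.comp_apply,
    LinearMap.rTensor_tmul, LinearMap.mul'_apply] at keyK
  have hL : galInv (Δ x) = ∑ i ∈ rx.index, ∑ j ∈ (rx1 i).index,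
      (rx1 i).left j ⊗ₜ[k] ((𝒮) ((rx1 i).right j) * rx.right i) := by
    rw [← rx.eq, map_sum]
    apply Finset.sum_congr rfl
    intro i _
    rw [galInv_tmul, ← (rx1 i).eq, map_sum]
    apply Finset.sum_congr rfl
    intro j _
    simp
  have hR : ∑ i ∈ rx.index, ∑ j ∈ (rx2 i).index,
      rx.left i ⊗ₜ[k] ((𝒮) ((rx2 i).left j) * (rx2 i).right j) = x ⊗ₜ[k] (1:H) := by
    have h1 : ∀ i ∈ rx.index, ∑ j ∈ (rx2 i).index,
        rx.left i ⊗ₜ[k] ((𝒮) ((rx2 i).left j) * (rx2 i).right j)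
        = (ε (rx.right i) • rx.left i) ⊗ₜ[k] (1:H) := by
      intro i _
      rw [← tmul_sum, HopfAlgebra.sum_antipode_mul_eq_algebraMap_counit (rx2 i), Algebra.algebraMap_eq_smul_one,
        tmul_smul, smul_tmul']
    rw [Finset.sum_congr rfl h1, ← sum_tmul, sum_smul_counit rx]
  rw [hL, keyK, hR]

lemma galInv_one_tmul (x : H) : galInv ((1:H) ⊗ₜ[k] x) = (1:H) ⊗ₜ[k] x := by
  rw [galInv_tmul, Bialgebra.comul_one, Algebra.TensorProduct.one_def]
  simp [antipode_one']

lemma JB_move {S : Set H} {b : H} (hb : b ∈ S) (x y : H) :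
    (JB k H S).mkQ ((x * b) ⊗ₜ[k] y) = (JB k H S).mkQ (x ⊗ₜ[k] (b * y)) := by
  rw [Submodule.mkQ_apply, Submodule.mkQ_apply]
  exact (Submodule.Quotient.eq _).2 (Submodule.subset_span ⟨x, y, b, hb, rfl⟩)

/-- The main computation: `galInv ((a*b) ⊗ h) ∈ J_B` for `b ∈ B⁺`. -/
lemma galInv_mul_mem_JB (B : Subalgebra k H) (hB : IsRightCoidealSubalgebra k H B)
    {b : H} (hb : b ∈ B) (hεb : ε b = 0) (a h₀ : H) :
    galInv ((a * b) ⊗ₜ[k] h₀) ∈ JB k H (B : Set H) := by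
  classical
  rw [← Submodule.Quotient.mk_eq_zero, ← Submodule.mkQ_apply]
  obtain ⟨s, hs⟩ := hB b hb
  obtain ⟨T, hT⟩ := TensorProduct.exists_finset (R := k) s
  have hΔb : Δ b = ∑ p ∈ T, ((p.1 : H) ⊗ₜ[k] p.2) := by
    rw [← hs, hT, map_sum]
    apply Finset.sum_congr rfl
    intro p _
    simp
  set ra := ℛ k a with hra
  have hΔab : Δ (a * b) = ∑ j ∈ ra.index, ∑ p ∈ T,
      (ra.left j * (p.1 : H)) ⊗ₜ[k] (ra.right j * p.2) := by
    rw [Bialgebra.comul_mul, ← ra.eq, hΔb, Finset.sum_mul_sum]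
    apply Finset.sum_congr rfl; intro j _
    apply Finset.sum_congr rfl; intro p _
    rw [Algebra.TensorProduct.tmul_mul_tmul]
  have e : galInv ((a * b) ⊗ₜ[k] h₀) = ∑ j ∈ ra.index, ∑ p ∈ T,
      (ra.left j * (p.1 : H)) ⊗ₜ[k] ((𝒮) (ra.right j * p.2) * h₀) := by
    rw [galInv_tmul, hΔab, map_sum]
    apply Finset.sum_congr rfl; intro j _
    rw [map_sum]
    apply Finset.sum_congr rfl; intro p _
    simp
  rw [e, map_sum]
  have hz : ∀ j ∈ ra.index, (JB k H (B : Set H)).mkQ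
      (∑ p ∈ T, (ra.left j * (p.1 : H)) ⊗ₜ[k] ((𝒮) (ra.right j * p.2) * h₀)) = 0 := by
    intro j _
    rw [map_sum]
    have h1 : ∀ p ∈ T, (JB k H (B : Set H)).mkQ
        ((ra.left j * (p.1 : H)) ⊗ₜ[k] ((𝒮) (ra.right j * p.2) * h₀))
        = (JB k H (B : Set H)).mkQ
          (ra.left j ⊗ₜ[k] ((p.1 : H) * ((𝒮) (ra.right j * p.2) * h₀))) := by
      intro p _
      exact JB_move p.1.2 _ _
    rw [Finset.sum_congr rfl h1, ← map_sum, ← tmul_sum]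
    have h2 : ∑ p ∈ T, (p.1 : H) * ((𝒮) (ra.right j * p.2) * h₀)
        = theta (ra.right j) h₀ (Δ b) := by
      rw [hΔb, map_sum]
      apply Finset.sum_congr rfl; intro p _
      rw [theta_tmul]
    rw [h2, theta_comul, hεb, zero_smul, tmul_zero, map_zero]
  rw [Finset.sum_congr rfl hz, Finset.sum_const_zero]

end Aux

/-- If `B` is a right coideal subalgebra satisfying the equalizer
condition, then `B = H^{co H/(HB⁺)}`. -/
theorem coinv_HSplus_eq (k H : Type*) [Field k] [Ring H] [HopfAlgebra k H]
    (B : Subalgebra k H) (hB : IsRightCoidealSubalgebra k H B)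
    (heq : equalizerCond k H (B : Set H)) :
    (B : Set H) = ((coinv k H (HSplus k H (B : Set H)) : Submodule k H) : Set H) := by
  classical
  set I := HSplus k H (B : Set H) with hI
  have hmemI : ∀ c ∈ B, (Coalgebra.counit : H →ₗ[k] k) c = 0 → c ∈ I := fun c hc hcε =>
    Submodule.subset_span ⟨1, c, ⟨hc, hcε⟩, (one_mul c).symm⟩
  have hπ : ∀ c : H, c ∈ B →
      I.mkQ c = (Coalgebra.counit : H →ₗ[k] k) c • I.mkQ 1 := by
    intro c hc
    have h1 : c - (Coalgebra.counit : H →ₗ[k] k) c • 1 ∈ I := by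
      apply hmemI
      · exact B.sub_mem hc (B.smul_mem B.one_mem _)
      · rw [map_sub, map_smul, Bialgebra.counit_one, smul_eq_mul, mul_one, sub_self]
    have h2 := (Submodule.Quotient.eq I).2 h1
    rw [← Submodule.mkQ_apply, ← Submodule.mkQ_apply, map_smul] at h2
    exact h2
  ext x
  simp only [SetLike.mem_coe, Set.mem_setOf_eq]
  constructor
  · -- B ⊆ coinv
    intro hx
    rw [coinv, LinearMap.mem_ker, LinearMap.sub_apply, sub_eq_zero, LinearMap.comp_apply]
    obtain ⟨s, hs⟩ := hB x hx
    have claim : ∀ t : (Subalgebra.toSubmodule B : Submodule k H) ⊗[k] H,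
        (TensorProduct.map I.mkQ (LinearMap.id : H →ₗ[k] H))
            ((TensorProduct.map (Subalgebra.toSubmodule B).subtype LinearMap.id) t)
          = TensorProduct.mk k (H ⧸ I) H (I.mkQ 1)
              (epsTensorId k H ((TensorProduct.map (Subalgebra.toSubmodule B).subtype
                LinearMap.id) t)) := by
      intro t
      induction t with
      | zero => simp
      | tmul b' y =>
          simp only [TensorProduct.map_tmul, LinearMap.id_coe, id_eq,
            Submodule.coe_subtype, TensorProduct.mk_apply, epsTensorId,
            LinearMap.comp_apply, LinearEquiv.coe_coe, TensorProduct.lid_tmul]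
          rw [hπ _ b'.2, smul_tmul]
      | add u v hu hv => rw [map_add, map_add, map_add, map_add, hu, hv]
    have h3 := claim s
    rw [hs] at h3
    rw [h3]
    congr 1
    -- epsTensorId (Δ x) = x
    have h4 : (TensorProduct.map (Coalgebra.counit : H →ₗ[k] k)
        (LinearMap.id : H →ₗ[k] H)) ((Coalgebra.comul : H →ₗ[k] H ⊗[k] H) x)
        = (1:k) ⊗ₜ[k] x := Coalgebra.rTensor_counit_comul x
    rw [epsTensorId, LinearMap.comp_apply, h4]
    simp
  · -- coinv ⊆ B
    intro hx
    rw [coinv, LinearMap.mem_ker, LinearMap.sub_apply, sub_eq_zero, LinearMap.comp_apply] at hx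
    have h1 : (LinearMap.rTensor H I.mkQ)
        ((Coalgebra.comul : H →ₗ[k] H ⊗[k] H) x - (1:H) ⊗ₜ[k] x) = 0 := by
      have : (LinearMap.rTensor H I.mkQ) ((1:H) ⊗ₜ[k] x) = I.mkQ 1 ⊗ₜ[k] x := by
        simp
      rw [map_sub, this]
      rw [sub_eq_zero]
      exact hx
    have h2 : (Coalgebra.comul : H →ₗ[k] H ⊗[k] H) x - (1:H) ⊗ₜ[k] x ∈
        LinearMap.range (LinearMap.rTensor H I.subtype) := by
      rw [← rTensor_mkQ H I]
      exact h1
    obtain ⟨s, hs⟩ := h2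
    have claim2 : ∀ t : (I : Submodule k H) ⊗[k] H,
        galInv ((LinearMap.rTensor H I.subtype) t) ∈ JB k H (B : Set H) := by
      intro t
      induction t with
      | zero => rw [map_zero, map_zero]; exact Submodule.zero_mem _
      | tmul i h₀ =>
          rw [LinearMap.rTensor_tmul, Submodule.subtype_apply]
          have hspan : (i : H) ∈ Submodule.span k
              {z : H | ∃ h : H, ∃ b ∈ plusPart k H (B : Set H), z = h * b} := i.2
          refine Submodule.span_induction
            (p := fun c _ => galInv (c ⊗ₜ[k] h₀) ∈ JB k H (B : Set H))
            ?_ ?_ ?_ ?_ hspan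
          · rintro c ⟨h₁, b, hbmem, rfl⟩
            exact galInv_mul_mem_JB B hB hbmem.1 hbmem.2 h₁ h₀
          · show galInv ((0:H) ⊗ₜ[k] h₀) ∈ JB k H (B : Set H)
            rw [zero_tmul, map_zero]; exact Submodule.zero_mem _
          · intro c d _ _ hc hd
            rw [add_tmul, map_add]; exact Submodule.add_mem _ hc hd
          · intro r c _ hc
            show galInv ((r • c) ⊗ₜ[k] h₀) ∈ JB k H (B : Set H)
            rw [← smul_tmul', map_smul]; exact Submodule.smul_mem _ _ hc
      | add u v hu hv => rw [map_add, map_add]; exact Submodule.add_mem _ hu hv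
    have h5 : x ⊗ₜ[k] (1:H) - (1:H) ⊗ₜ[k] x ∈ JB k H (B : Set H) := by
      have := claim2 s
      rw [hs, map_sub, galInv_comul, galInv_one_tmul] at this
      exact this
    have h6 : x ∈ {h : H | h ⊗ₜ[k] (1 : H) - (1 : H) ⊗ₜ[k] h ∈ JB k H (B : Set H)} := h5
    rw [heq] at h6
    exact h6

end HopfGalois
end
end

section
/- Let k be a field, H a Hopf algebra over k, and I a left ideal coideal of H such that I equals the subspace of H spanned by {Σᵢ ε(xᵢ)yᵢ − Σᵢ xᵢε(yᵢ) : Σᵢ xᵢ ⊗ yᵢ ∈ H □^{H/I} H}. Then I = H·(H^{co H/I})⁺, the left ideal of H generated by {b ∈ H^{co H/I} : ε(b) = 0}. -/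
open TensorProduct

noncomputable section

namespace HopfGalois

variable (k : Type*) (H : Type*) [Field k] [Ring H] [HopfAlgebra k H]

/-! ### Auxiliary machinery for the proof -/

section Aux

open Coalgebra HopfAlgebra

/-- `Σ ε(x₍₂₎) • x₍₁₎ = x`. -/
lemma sum_counit_right_smul {a : H} {ι : Type*} (r : Coalgebra.Repr k a ι) :
    ∑ i ∈ r.index, Coalgebra.counit (R := k) (r.right i) • r.left i = a := by
  calc ∑ i ∈ r.index, Coalgebra.counit (R := k) (r.right i) • r.left i
      = (TensorProduct.rid k H)
          (∑ i ∈ r.index, r.left i ⊗ₜ[k] Coalgebra.counit (R := k) (r.right i)) := by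
        rw [map_sum]
        exact Finset.sum_congr rfl fun i _ => (TensorProduct.rid_tmul _ _).symm
    _ = (TensorProduct.rid k H) (a ⊗ₜ[k] (1 : k)) := by
        rw [Coalgebra.sum_tmul_counit_eq (R := k) r]
    _ = a := by rw [TensorProduct.rid_tmul, one_smul]

/-- `Σ ε(x₍₁₎) • x₍₂₎ = x`. -/
lemma sum_counit_left_smul {a : H} {ι : Type*} (r : Coalgebra.Repr k a ι) :
    ∑ i ∈ r.index, Coalgebra.counit (R := k) (r.left i) • r.right i = a := by
  calc ∑ i ∈ r.index, Coalgebra.counit (R := k) (r.left i) • r.right i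
      = (TensorProduct.lid k H)
          (∑ i ∈ r.index, Coalgebra.counit (R := k) (r.left i) ⊗ₜ[k] r.right i) := by
        rw [map_sum]
        exact Finset.sum_congr rfl fun i _ => (TensorProduct.lid_tmul _ _).symm
    _ = (TensorProduct.lid k H) ((1 : k) ⊗ₜ[k] a) := by
        rw [Coalgebra.sum_counit_tmul_eq (R := k) r]
    _ = a := by rw [TensorProduct.lid_tmul, one_smul]

lemma counit_antipode (a : H) :
    Coalgebra.counit (R := k) (antipode (R := k) a) = Coalgebra.counit (R := k) a := by
  have h := HopfAlgebra.sum_mul_antipode_eq_smul (R := k) (ℛ k a)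
  apply_fun (Coalgebra.counit : H →ₗ[k] k) at h
  simp only [map_sum, map_smul, Bialgebra.counit_mul, Bialgebra.counit_one, smul_eq_mul,
    mul_one] at h
  calc Coalgebra.counit (R := k) (antipode (R := k) a)
      = Coalgebra.counit (R := k)
        (antipode (R := k) (∑ i ∈ (ℛ k a).index,
          Coalgebra.counit (R := k) ((ℛ k a).left i) • (ℛ k a).right i)) := by
        rw [sum_counit_left_smul]
    _ = Coalgebra.counit (R := k) a := by
        rw [map_sum, map_sum]
        simpa [smul_eq_mul] using h

/-- The one-legged twist `x ⊗ y ↦ Σ x₍₁₎ ⊗ f(x₍₂₎) * y`. -/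
def auxPhi1 (f : H →ₗ[k] H) : H ⊗[k] H →ₗ[k] H ⊗[k] H :=
  (LinearMap.mul' k H).lTensor H ∘ₗ (TensorProduct.assoc k H H H).toLinearMap ∘ₗ
    ((f.lTensor H ∘ₗ (Coalgebra.comul : H →ₗ[k] H ⊗[k] H)).rTensor H)

lemma auxPhi1_tmul (f : H →ₗ[k] H) (x y : H) {ι : Type*} (r : Coalgebra.Repr k x ι) :
    auxPhi1 k H f (x ⊗ₜ[k] y) = ∑ i ∈ r.index, r.left i ⊗ₜ[k] (f (r.right i) * y) := by
  simp only [auxPhi1, LinearMap.comp_apply, LinearMap.rTensor_tmul]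
  rw [← r.eq]
  simp [map_sum, TensorProduct.sum_tmul]

/-- The two-legged twist `x ⊗ w ↦ Σ x₍₁₎ ⊗ g(x₍₂₎) * w`, `w ∈ H ⊗ H`. -/
def auxPhi (g : H →ₗ[k] H ⊗[k] H) : H ⊗[k] (H ⊗[k] H) →ₗ[k] H ⊗[k] (H ⊗[k] H) :=
  (LinearMap.mul' k (H ⊗[k] H)).lTensor H ∘ₗ
    (TensorProduct.assoc k H (H ⊗[k] H) (H ⊗[k] H)).toLinearMap ∘ₗ
    ((g.lTensor H ∘ₗ (Coalgebra.comul : H →ₗ[k] H ⊗[k] H)).rTensor (H ⊗[k] H))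

lemma auxPhi_tmul (g : H →ₗ[k] H ⊗[k] H) (x : H) (w : H ⊗[k] H) {ι : Type*} (r : Coalgebra.Repr k x ι) :
    auxPhi k H g (x ⊗ₜ[k] w) = ∑ i ∈ r.index, r.left i ⊗ₜ[k] (g (r.right i) * w) := by
  simp only [auxPhi, LinearMap.comp_apply, LinearMap.rTensor_tmul]
  rw [← r.eq]
  simp [map_sum, TensorProduct.sum_tmul]

/-- `θ : a ↦ Σ S(a₍₂₎) ⊗ S(a₍₁₎)`. -/
def auxTheta : H →ₗ[k] H ⊗[k] H :=
  TensorProduct.map (antipode (R := k)) (antipode (R := k)) ∘ₗ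
    (TensorProduct.comm k H H).toLinearMap ∘ₗ (Coalgebra.comul : H →ₗ[k] H ⊗[k] H)

lemma auxTheta_apply (a : H) {ι : Type*} (r : Coalgebra.Repr k a ι) :
    auxTheta k H a = ∑ i ∈ r.index,
      antipode (R := k) (r.right i) ⊗ₜ[k] antipode (R := k) (r.left i) := by
  simp only [auxTheta, LinearMap.comp_apply]
  rw [← r.eq]
  simp [map_sum]

/-- Convolution product of two maps `H → H ⊗ H`. -/
def auxConv (θ δ : H →ₗ[k] H ⊗[k] H) : H →ₗ[k] H ⊗[k] H :=
  LinearMap.mul' k (H ⊗[k] H) ∘ₗ TensorProduct.map θ δ ∘ₗ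
    (Coalgebra.comul : H →ₗ[k] H ⊗[k] H)

lemma auxConv_apply (θ δ : H →ₗ[k] H ⊗[k] H) (a : H) {ι : Type*} (r : Coalgebra.Repr k a ι) :
    auxConv k H θ δ a = ∑ i ∈ r.index, θ (r.left i) * δ (r.right i) := by
  simp only [auxConv, LinearMap.comp_apply]
  rw [← r.eq]
  simp [map_sum]

lemma auxPhi_comp (θ δ : H →ₗ[k] H ⊗[k] H) :
    auxPhi k H θ ∘ₗ auxPhi k H δ = auxPhi k H (auxConv k H θ δ) := by
  apply TensorProduct.ext'
  intro x w
  set r := ℛ k x with hr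
  set J : H ⊗[k] H →ₗ[k] H ⊗[k] H :=
    LinearMap.mul' k (H ⊗[k] H) ∘ₗ
      TensorProduct.map θ (LinearMap.mulRight k w ∘ₗ δ) with hJ
  have key := Coalgebra.sum_tmul_tmul_eq r (fun i => ℛ k (r.left i)) (fun i => ℛ k (r.right i))
  apply_fun J.lTensor H at key
  simp only [map_sum, LinearMap.lTensor_tmul, hJ, LinearMap.comp_apply,
    TensorProduct.map_tmul, LinearMap.mul'_apply, LinearMap.mulRight_apply] at key
  calc (auxPhi k H θ ∘ₗ auxPhi k H δ) (x ⊗ₜ[k] w)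
      = ∑ i ∈ r.index, auxPhi k H θ (r.left i ⊗ₜ[k] (δ (r.right i) * w)) := by
        rw [LinearMap.comp_apply, auxPhi_tmul k H δ x w r, map_sum]
    _ = ∑ i ∈ r.index, ∑ j ∈ (ℛ k (r.left i)).index,
          (ℛ k (r.left i)).left j ⊗ₜ[k]
            (θ ((ℛ k (r.left i)).right j) * (δ (r.right i) * w)) := by
        exact Finset.sum_congr rfl fun i _ =>
          auxPhi_tmul k H θ (r.left i) (δ (r.right i) * w) (ℛ k (r.left i))
    _ = ∑ i ∈ r.index, ∑ j ∈ (ℛ k (r.right i)).index,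
          r.left i ⊗ₜ[k]
            (θ ((ℛ k (r.right i)).left j) * (δ ((ℛ k (r.right i)).right j) * w)) := key
    _ = auxPhi k H (auxConv k H θ δ) (x ⊗ₜ[k] w) := by
        rw [auxPhi_tmul k H (auxConv k H θ δ) x w r]
        refine Finset.sum_congr rfl fun i _ => ?_
        rw [auxConv_apply k H θ δ (r.right i) (ℛ k (r.right i)), Finset.sum_mul,
          TensorProduct.tmul_sum]
        exact Finset.sum_congr rfl fun j _ => by rw [mul_assoc]

lemma auxConv_theta_comul :
    auxConv k H (auxTheta k H) (Coalgebra.comul : H →ₗ[k] H ⊗[k] H) =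
      Algebra.linearMap k (H ⊗[k] H) ∘ₗ (Coalgebra.counit : H →ₗ[k] k) := by
  apply LinearMap.ext
  intro x
  set r := ℛ k x with hr
  have key := Coalgebra.sum_tmul_tmul_eq r (fun i => ℛ k (r.left i)) (fun i => ℛ k (r.right i))
  apply_fun (LinearMap.mul' k (H ⊗[k] H) ∘ₗ
    TensorProduct.map (auxTheta k H) (LinearMap.id : H ⊗[k] H →ₗ[k] H ⊗[k] H)) at key
  simp only [map_sum, LinearMap.comp_apply, TensorProduct.map_tmul, LinearMap.id_coe, id_eq,
    LinearMap.mul'_apply] at key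
  have inner : ∀ i ∈ r.index,
      ∑ p ∈ (ℛ k (r.left i)).index,
        auxTheta k H ((ℛ k (r.left i)).left p) *
          ((ℛ k (r.left i)).right p ⊗ₜ[k] r.right i) =
      (1 : H) ⊗ₜ[k] (antipode (R := k) (r.left i) * r.right i) := by
    intro i _
    have key2 := Coalgebra.sum_tmul_tmul_eq (ℛ k (r.left i))
      (fun p => ℛ k ((ℛ k (r.left i)).left p)) (fun p => ℛ k ((ℛ k (r.left i)).right p))
    apply_fun (((LinearMap.mulRight k (r.right i)).lTensor H) ∘ₗ
      (TensorProduct.comm k H H).toLinearMap ∘ₗ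
      TensorProduct.map (antipode (R := k))
        (LinearMap.mul' k H ∘ₗ ((antipode (R := k)).rTensor H))) at key2
    simp only [map_sum, LinearMap.comp_apply, TensorProduct.map_tmul, LinearMap.rTensor_tmul,
      LinearMap.mul'_apply, LinearEquiv.coe_coe, TensorProduct.comm_tmul,
      LinearMap.lTensor_tmul, LinearMap.mulRight_apply] at key2
    calc ∑ p ∈ (ℛ k (r.left i)).index,
          auxTheta k H ((ℛ k (r.left i)).left p) *
            ((ℛ k (r.left i)).right p ⊗ₜ[k] r.right i)
        = ∑ p ∈ (ℛ k (r.left i)).index, ∑ s ∈ (ℛ k ((ℛ k (r.left i)).left p)).index,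
            (antipode (R := k) ((ℛ k ((ℛ k (r.left i)).left p)).right s) *
              (ℛ k (r.left i)).right p) ⊗ₜ[k]
            (antipode (R := k) ((ℛ k ((ℛ k (r.left i)).left p)).left s) * r.right i) := by
          refine Finset.sum_congr rfl fun p _ => ?_
          rw [auxTheta_apply k H _ (ℛ k ((ℛ k (r.left i)).left p)), Finset.sum_mul]
          exact Finset.sum_congr rfl fun s _ => by
            rw [Algebra.TensorProduct.tmul_mul_tmul]
      _ = ∑ p ∈ (ℛ k (r.left i)).index, ∑ s ∈ (ℛ k ((ℛ k (r.left i)).right p)).index,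
            (antipode (R := k) ((ℛ k ((ℛ k (r.left i)).right p)).left s) *
              (ℛ k ((ℛ k (r.left i)).right p)).right s) ⊗ₜ[k]
            (antipode (R := k) ((ℛ k (r.left i)).left p) * r.right i) := key2
      _ = ∑ p ∈ (ℛ k (r.left i)).index,
            (1 : H) ⊗ₜ[k] ((Coalgebra.counit (R := k) ((ℛ k (r.left i)).right p) •
              antipode (R := k) ((ℛ k (r.left i)).left p)) * r.right i) := by
          refine Finset.sum_congr rfl fun p _ => ?_
          rw [← TensorProduct.sum_tmul,
            HopfAlgebra.sum_antipode_mul_eq_smul (ℛ k ((ℛ k (r.left i)).right p)),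
            TensorProduct.smul_tmul, smul_mul_assoc]
      _ = (1 : H) ⊗ₜ[k] (antipode (R := k) (r.left i) * r.right i) := by
          rw [← TensorProduct.tmul_sum]
          congr 1
          rw [← Finset.sum_mul]
          congr 1
          calc ∑ p ∈ (ℛ k (r.left i)).index,
                Coalgebra.counit (R := k) ((ℛ k (r.left i)).right p) •
                  antipode (R := k) ((ℛ k (r.left i)).left p)
              = antipode (R := k) (∑ p ∈ (ℛ k (r.left i)).index,
                  Coalgebra.counit (R := k) ((ℛ k (r.left i)).right p) •
                    (ℛ k (r.left i)).left p) := by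
                rw [map_sum]
                exact Finset.sum_congr rfl fun p _ => (map_smul _ _ _).symm
            _ = antipode (R := k) (r.left i) := by rw [sum_counit_right_smul]
  calc auxConv k H (auxTheta k H) (Coalgebra.comul : H →ₗ[k] H ⊗[k] H) x
      = ∑ i ∈ r.index, auxTheta k H (r.left i) * Coalgebra.comul (R := k) (r.right i) := by
        rw [auxConv_apply k H _ _ x r]
    _ = ∑ i ∈ r.index, ∑ j ∈ (ℛ k (r.right i)).index,
          auxTheta k H (r.left i) *
            ((ℛ k (r.right i)).left j ⊗ₜ[k] (ℛ k (r.right i)).right j) := by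
        refine Finset.sum_congr rfl fun i _ => ?_
        rw [← (ℛ k (r.right i)).eq, Finset.mul_sum]
    _ = ∑ i ∈ r.index, ∑ p ∈ (ℛ k (r.left i)).index,
          auxTheta k H ((ℛ k (r.left i)).left p) *
            ((ℛ k (r.left i)).right p ⊗ₜ[k] r.right i) := key.symm
    _ = ∑ i ∈ r.index, (1 : H) ⊗ₜ[k] (antipode (R := k) (r.left i) * r.right i) :=
        Finset.sum_congr rfl inner
    _ = (1 : H) ⊗ₜ[k] (algebraMap k H (Coalgebra.counit (R := k) x)) := by
        rw [← TensorProduct.tmul_sum, HopfAlgebra.sum_antipode_mul_eq_algebraMap_counit r]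
    _ = (Algebra.linearMap k (H ⊗[k] H) ∘ₗ (Coalgebra.counit : H →ₗ[k] k)) x := by
        rw [LinearMap.comp_apply, Algebra.linearMap_apply,
          Algebra.algebraMap_eq_smul_one, Algebra.algebraMap_eq_smul_one,
          TensorProduct.tmul_smul, Algebra.TensorProduct.one_def]

lemma auxPhi_unit :
    auxPhi k H (Algebra.linearMap k (H ⊗[k] H) ∘ₗ (Coalgebra.counit : H →ₗ[k] k)) =
      LinearMap.id := by
  apply TensorProduct.ext'
  intro x w
  rw [auxPhi_tmul k H _ x w (ℛ k x)]
  calc ∑ i ∈ (ℛ k x).index, (ℛ k x).left i ⊗ₜ[k]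
        ((Algebra.linearMap k (H ⊗[k] H) ∘ₗ (Coalgebra.counit : H →ₗ[k] k))
          ((ℛ k x).right i) * w)
      = ∑ i ∈ (ℛ k x).index,
          (Coalgebra.counit (R := k) ((ℛ k x).right i) • (ℛ k x).left i) ⊗ₜ[k] w := by
        refine Finset.sum_congr rfl fun i _ => ?_
        rw [LinearMap.comp_apply, Algebra.linearMap_apply, ← Algebra.smul_def,
          TensorProduct.tmul_smul, TensorProduct.smul_tmul']
    _ = x ⊗ₜ[k] w := by
        rw [← TensorProduct.sum_tmul, sum_counit_right_smul]
    _ = LinearMap.id (x ⊗ₜ[k] w) := rfl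

lemma auxThetaLift_L2 :
    auxPhi k H (auxTheta k H) ∘ₗ auxPhi k H (Coalgebra.comul : H →ₗ[k] H ⊗[k] H) =
      LinearMap.id := by
  rw [auxPhi_comp, auxConv_theta_comul, auxPhi_unit]

lemma auxPhiId_psi :
    auxPhi1 k H LinearMap.id ∘ₗ auxPhi1 k H (antipode (R := k)) = LinearMap.id := by
  apply TensorProduct.ext'
  intro x y
  set r := ℛ k x with hr
  have key := Coalgebra.sum_tmul_tmul_eq r (fun i => ℛ k (r.left i)) (fun i => ℛ k (r.right i))
  apply_fun ((LinearMap.mul' k H ∘ₗ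
    ((LinearMap.mulRight k y ∘ₗ antipode (R := k)).lTensor H)).lTensor H) at key
  simp only [map_sum, LinearMap.lTensor_tmul, LinearMap.comp_apply, LinearMap.mul'_apply,
    LinearMap.mulRight_apply] at key
  calc (auxPhi1 k H LinearMap.id ∘ₗ auxPhi1 k H (antipode (R := k))) (x ⊗ₜ[k] y)
      = ∑ i ∈ r.index, auxPhi1 k H LinearMap.id
          (r.left i ⊗ₜ[k] (antipode (R := k) (r.right i) * y)) := by
        rw [LinearMap.comp_apply, auxPhi1_tmul k H _ x y r, map_sum]
    _ = ∑ i ∈ r.index, ∑ j ∈ (ℛ k (r.left i)).index,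
          (ℛ k (r.left i)).left j ⊗ₜ[k]
            ((ℛ k (r.left i)).right j * (antipode (R := k) (r.right i) * y)) := by
        refine Finset.sum_congr rfl fun i _ => ?_
        rw [auxPhi1_tmul k H _ _ _ (ℛ k (r.left i))]
        simp only [LinearMap.id_coe, id_eq]
    _ = ∑ i ∈ r.index, ∑ j ∈ (ℛ k (r.right i)).index,
          r.left i ⊗ₜ[k]
            ((ℛ k (r.right i)).left j * (antipode (R := k) ((ℛ k (r.right i)).right j) * y)) :=
        key
    _ = ∑ i ∈ r.index, (Coalgebra.counit (R := k) (r.right i) • r.left i) ⊗ₜ[k] y := by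
        refine Finset.sum_congr rfl fun i _ => ?_
        rw [← TensorProduct.tmul_sum]
        have : ∑ j ∈ (ℛ k (r.right i)).index,
            (ℛ k (r.right i)).left j * (antipode (R := k) ((ℛ k (r.right i)).right j) * y) =
            Coalgebra.counit (R := k) (r.right i) • y := by
          calc ∑ j ∈ (ℛ k (r.right i)).index,
                (ℛ k (r.right i)).left j * (antipode (R := k) ((ℛ k (r.right i)).right j) * y)
              = (∑ j ∈ (ℛ k (r.right i)).index,
                  (ℛ k (r.right i)).left j * antipode (R := k) ((ℛ k (r.right i)).right j)) *
                  y := by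
                rw [Finset.sum_mul]
                exact Finset.sum_congr rfl fun j _ => (mul_assoc _ _ _).symm
            _ = Coalgebra.counit (R := k) (r.right i) • y := by
                rw [HopfAlgebra.sum_mul_antipode_eq_smul (ℛ k (r.right i)), smul_mul_assoc,
                  one_mul]
        rw [this, TensorProduct.tmul_smul, TensorProduct.smul_tmul']
    _ = x ⊗ₜ[k] y := by rw [← TensorProduct.sum_tmul, sum_counit_right_smul]
    _ = LinearMap.id (x ⊗ₜ[k] y) := rfl

lemma eps_sub_eq :
    epsTensorId k H - idTensorEps k H =
      (LinearMap.mul' k H - idTensorEps k H) ∘ₗ auxPhi1 k H (antipode (R := k)) := by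
  apply TensorProduct.ext'
  intro x y
  set r := ℛ k x with hr
  have hmu : ∑ i ∈ r.index,
      LinearMap.mul' k H (r.left i ⊗ₜ[k] (antipode (R := k) (r.right i) * y)) =
      Coalgebra.counit (R := k) x • y := by
    calc ∑ i ∈ r.index,
          LinearMap.mul' k H (r.left i ⊗ₜ[k] (antipode (R := k) (r.right i) * y))
        = (∑ i ∈ r.index, r.left i * antipode (R := k) (r.right i)) * y := by
          rw [Finset.sum_mul]
          exact Finset.sum_congr rfl fun i _ => by
            rw [LinearMap.mul'_apply, mul_assoc]
      _ = Coalgebra.counit (R := k) x • y := by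
          rw [HopfAlgebra.sum_mul_antipode_eq_smul r, smul_mul_assoc, one_mul]
  have heps : ∑ i ∈ r.index,
      idTensorEps k H (r.left i ⊗ₜ[k] (antipode (R := k) (r.right i) * y)) =
      Coalgebra.counit (R := k) y • x := by
    calc ∑ i ∈ r.index,
          idTensorEps k H (r.left i ⊗ₜ[k] (antipode (R := k) (r.right i) * y))
        = ∑ i ∈ r.index, Coalgebra.counit (R := k) y •
            (Coalgebra.counit (R := k) (r.right i) • r.left i) := by
          refine Finset.sum_congr rfl fun i _ => ?_
          simp only [idTensorEps, LinearMap.comp_apply, TensorProduct.map_tmul,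
            LinearMap.id_coe, id_eq, LinearEquiv.coe_coe, TensorProduct.rid_tmul,
            Bialgebra.counit_mul, counit_antipode]
          rw [mul_comm, mul_smul]
      _ = Coalgebra.counit (R := k) y • x := by
          rw [← Finset.smul_sum, sum_counit_right_smul]
  have hL1 : epsTensorId k H (x ⊗ₜ[k] y) = Coalgebra.counit (R := k) x • y := by
    simp [epsTensorId]
  have hL2 : idTensorEps k H (x ⊗ₜ[k] y) = Coalgebra.counit (R := k) y • x := by
    simp [idTensorEps]
  rw [LinearMap.sub_apply, LinearMap.comp_apply, LinearMap.sub_apply,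
    auxPhi1_tmul k H _ x y r, map_sum, map_sum, hmu, heps, hL1, hL2]

/-- The lift of `cotensorL` before applying the quotient map. -/
def auxLp : H ⊗[k] H →ₗ[k] H ⊗[k] (H ⊗[k] H) :=
  (TensorProduct.assoc k H H H).toLinearMap ∘ₗ
    ((Coalgebra.comul : H →ₗ[k] H ⊗[k] H).rTensor H)

lemma auxLp_tmul (u v : H) {ι : Type*} (ru : Coalgebra.Repr k u ι) :
    auxLp k H (u ⊗ₜ[k] v) = ∑ p ∈ ru.index, ru.left p ⊗ₜ[k] (ru.right p ⊗ₜ[k] v) := by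
  simp only [auxLp, LinearMap.comp_apply, LinearMap.rTensor_tmul]
  rw [← ru.eq]
  simp [map_sum, TensorProduct.sum_tmul]

lemma cotensorL_eq (I : Submodule k H) :
    cotensorL k H I = ((I.mkQ.rTensor H).lTensor H) ∘ₗ auxLp k H := rfl

lemma cotensorR_eq (I : Submodule k H) :
    cotensorR k H I = ((I.mkQ.rTensor H).lTensor H) ∘ₗ
      ((Coalgebra.comul : H →ₗ[k] H ⊗[k] H).lTensor H) := by
  rw [← LinearMap.lTensor_comp]; rfl

lemma auxLp_phi :
    auxLp k H ∘ₗ auxPhi1 k H LinearMap.id =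
      auxPhi k H (Coalgebra.comul : H →ₗ[k] H ⊗[k] H) ∘ₗ
        ((TensorProduct.mk k H H 1).lTensor H) := by
  apply TensorProduct.ext'
  intro x y
  set r := ℛ k x with hr
  have key := Coalgebra.sum_map_tmul_tmul_eq (R := k)
    (LinearMap.id : H →ₗ[k] H) (LinearMap.id : H →ₗ[k] H) (LinearMap.mulRight k y) x
    (repr := r) (a₁ := fun i => ℛ k (r.left i)) (a₂ := fun i => ℛ k (r.right i))
  simp only [LinearMap.id_coe, id_eq, LinearMap.mulRight_apply] at key
  calc (auxLp k H ∘ₗ auxPhi1 k H LinearMap.id) (x ⊗ₜ[k] y)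
      = ∑ i ∈ r.index, auxLp k H (r.left i ⊗ₜ[k] (r.right i * y)) := by
        rw [LinearMap.comp_apply, auxPhi1_tmul k H _ x y r, map_sum]
        exact Finset.sum_congr rfl fun i _ => by simp
    _ = ∑ i ∈ r.index, ∑ p ∈ (ℛ k (r.left i)).index,
          (ℛ k (r.left i)).left p ⊗ₜ[k] ((ℛ k (r.left i)).right p ⊗ₜ[k] (r.right i * y)) := by
        exact Finset.sum_congr rfl fun i _ => auxLp_tmul k H _ _ (ℛ k (r.left i))
    _ = ∑ i ∈ r.index, ∑ j ∈ (ℛ k (r.right i)).index,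
          r.left i ⊗ₜ[k] ((ℛ k (r.right i)).left j ⊗ₜ[k] ((ℛ k (r.right i)).right j * y)) :=
        key.symm
    _ = (auxPhi k H (Coalgebra.comul : H →ₗ[k] H ⊗[k] H) ∘ₗ
          ((TensorProduct.mk k H H 1).lTensor H)) (x ⊗ₜ[k] y) := by
        rw [LinearMap.comp_apply, LinearMap.lTensor_tmul, TensorProduct.mk_apply,
          auxPhi_tmul k H _ x _ r]
        refine Finset.sum_congr rfl fun i _ => ?_
        have hmul : Coalgebra.comul (R := k) (r.right i) * ((1 : H) ⊗ₜ[k] y) =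
            ∑ j ∈ (ℛ k (r.right i)).index,
              (ℛ k (r.right i)).left j ⊗ₜ[k] ((ℛ k (r.right i)).right j * y) := by
          rw [← (ℛ k (r.right i)).eq, Finset.sum_mul]
          exact Finset.sum_congr rfl fun j _ => by
            rw [Algebra.TensorProduct.tmul_mul_tmul, mul_one]
        rw [hmul, TensorProduct.tmul_sum]

lemma auxComul_phi :
    ((Coalgebra.comul : H →ₗ[k] H ⊗[k] H).lTensor H) ∘ₗ auxPhi1 k H LinearMap.id =
      auxPhi k H (Coalgebra.comul : H →ₗ[k] H ⊗[k] H) ∘ₗ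
        ((Coalgebra.comul : H →ₗ[k] H ⊗[k] H).lTensor H) := by
  apply TensorProduct.ext'
  intro x y
  rw [LinearMap.comp_apply, LinearMap.comp_apply, LinearMap.lTensor_tmul,
    auxPhi_tmul k H _ x (Coalgebra.comul (R := k) y) (ℛ k x),
    auxPhi1_tmul k H _ x y (ℛ k x), map_sum]
  refine Finset.sum_congr rfl fun i _ => ?_
  rw [LinearMap.lTensor_tmul]
  simp only [LinearMap.id_coe, id_eq]
  rw [Bialgebra.comul_mul]

lemma aux_mul_mem (I : Submodule k H) (hI : IsLeftIdealCoideal k H I)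
    (v : H ⊗[k] H) (u : (↥I) ⊗[k] H) :
    (I.mkQ.rTensor H) (v * (I.subtype.rTensor H u)) = 0 := by
  induction u using TensorProduct.induction_on with
  | zero => simp
  | tmul m y =>
    rw [LinearMap.rTensor_tmul]
    induction v using TensorProduct.induction_on with
    | zero => simp
    | tmul a b =>
      rw [Submodule.subtype_apply, Algebra.TensorProduct.tmul_mul_tmul,
        LinearMap.rTensor_tmul]
      have hz : I.mkQ (a * (m : H)) = 0 := by
        rw [Submodule.mkQ_apply, Submodule.Quotient.mk_eq_zero]
        exact hI.mul_mem_left a (m : H) m.2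
      rw [hz, TensorProduct.zero_tmul]
    | add v1 v2 h1 h2 => rw [add_mul, map_add, h1, h2, add_zero]
  | add u1 u2 h1 h2 => rw [map_add, mul_add, map_add, h1, h2, add_zero]

lemma aux_vanish (I : Submodule k H) (hI : IsLeftIdealCoideal k H I)
    (s : H ⊗[k] ((↥I) ⊗[k] H)) :
    ((I.mkQ.rTensor H).lTensor H)
      (auxPhi k H (auxTheta k H) (((I.subtype.rTensor H).lTensor H) s)) = 0 := by
  induction s using TensorProduct.induction_on with
  | zero => simp
  | tmul x u =>
    rw [LinearMap.lTensor_tmul, auxPhi_tmul k H _ x _ (ℛ k x), map_sum]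
    refine Finset.sum_eq_zero fun i _ => ?_
    rw [LinearMap.lTensor_tmul, aux_mul_mem k H I hI _ u, TensorProduct.tmul_zero]
  | add u1 u2 h1 h2 => rw [map_add, map_add, map_add, h1, h2, add_zero]

lemma aux_kerP (I : Submodule k H) :
    LinearMap.ker ((I.mkQ.rTensor H).lTensor H) =
      LinearMap.range ((I.subtype.rTensor H).lTensor H) :=
  LinearMap.exact_iff.mp
    (Module.Flat.lTensor_exact H (Module.Flat.rTensor_exact H (LinearMap.exact_subtype_mkQ I)))

lemma aux_kerD (I : Submodule k H) :
    LinearMap.ker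
      ((((TensorProduct.map I.mkQ (LinearMap.id : H →ₗ[k] H)
          ∘ₗ (Coalgebra.comul : H →ₗ[k] H ⊗[k] H))
        - TensorProduct.mk k (H ⧸ I) H (I.mkQ 1)).lTensor H)) =
      LinearMap.range ((coinv k H I).subtype.lTensor H) :=
  LinearMap.exact_iff.mp
    (Module.Flat.lTensor_exact H (LinearMap.exact_subtype_ker_map _))

lemma one_mem_coinv (I : Submodule k H) : (1 : H) ∈ coinv k H I := by
  have : ((TensorProduct.map I.mkQ (LinearMap.id : H →ₗ[k] H)
      ∘ₗ (Coalgebra.comul : H →ₗ[k] H ⊗[k] H))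
    - TensorProduct.mk k (H ⧸ I) H (I.mkQ 1)) (1 : H) = 0 := by
    rw [LinearMap.sub_apply, LinearMap.comp_apply, Bialgebra.comul_one,
      Algebra.TensorProduct.one_def, TensorProduct.map_tmul, TensorProduct.mk_apply,
      LinearMap.id_coe, id_eq, sub_self]
  exact this

end Aux

/-- If `I` is a left ideal coideal satisfying the coequalizer condition,
then `I = H·(H^{co H/I})⁺`. -/
theorem HSplus_coinv_eq (k H : Type*) [Field k] [Ring H] [HopfAlgebra k H]
    (I : Submodule k H) (hI : IsLeftIdealCoideal k H I) (hco : coequalizerCond k H I) :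
    I = HSplus k H ((coinv k H I : Submodule k H) : Set H) := by
  have hco' : I = Submodule.map (epsTensorId k H - idTensorEps k H) (cotensor k H I) := hco
  apply le_antisymm
  · -- I ≤ H·(coinv)⁺
    intro z hz
    rw [hco'] at hz
    obtain ⟨t, ht, rfl⟩ := hz
    have ht' : t ∈ LinearMap.ker (cotensorL k H I - cotensorR k H I) := ht
    have hLR : cotensorL k H I t = cotensorR k H I t := by
      have h0 := LinearMap.mem_ker.mp ht'
      rw [LinearMap.sub_apply, sub_eq_zero] at h0
      exact h0
    set w := auxPhi1 k H (HopfAlgebra.antipode (R := k)) t with hw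
    have hphi : auxPhi1 k H LinearMap.id w = t := by
      have := LinearMap.congr_fun (auxPhiId_psi k H) t
      simpa [hw] using this
    have e1 : cotensorL k H I t =
        ((I.mkQ.rTensor H).lTensor H)
          (auxPhi k H (Coalgebra.comul : H →ₗ[k] H ⊗[k] H)
            (((TensorProduct.mk k H H 1).lTensor H) w)) := by
      conv_lhs => rw [cotensorL_eq k H I]
      rw [LinearMap.comp_apply, ← hphi]
      congr 1
      have := LinearMap.congr_fun (auxLp_phi k H) w
      simpa using this
    have e2 : cotensorR k H I t =
        ((I.mkQ.rTensor H).lTensor H)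
          (auxPhi k H (Coalgebra.comul : H →ₗ[k] H ⊗[k] H)
            (((Coalgebra.comul : H →ₗ[k] H ⊗[k] H).lTensor H) w)) := by
      conv_lhs => rw [cotensorR_eq k H I]
      rw [LinearMap.comp_apply, ← hphi]
      congr 1
      have := LinearMap.congr_fun (auxComul_phi k H) w
      simpa using this
    set v := ((TensorProduct.mk k H H 1).lTensor H) w -
      ((Coalgebra.comul : H →ₗ[k] H ⊗[k] H).lTensor H) w with hv
    have e3 : ((I.mkQ.rTensor H).lTensor H)
        (auxPhi k H (Coalgebra.comul : H →ₗ[k] H ⊗[k] H) v) = 0 := by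
      rw [hv, map_sub, map_sub, ← e1, ← e2, hLR, sub_self]
    obtain ⟨s, hs⟩ : auxPhi k H (Coalgebra.comul : H →ₗ[k] H ⊗[k] H) v ∈
        LinearMap.range ((I.subtype.rTensor H).lTensor H) := by
      rw [← aux_kerP k H I]
      exact LinearMap.mem_ker.mpr e3
    have e4 : v = auxPhi k H (auxTheta k H)
        (auxPhi k H (Coalgebra.comul : H →ₗ[k] H ⊗[k] H) v) := by
      have := LinearMap.congr_fun (auxThetaLift_L2 k H) v
      simpa using this.symm
    have e5 : ((I.mkQ.rTensor H).lTensor H) v = 0 := by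
      rw [e4, ← hs]
      exact aux_vanish k H I hI s
    have e6 : ((((TensorProduct.map I.mkQ (LinearMap.id : H →ₗ[k] H)
          ∘ₗ (Coalgebra.comul : H →ₗ[k] H ⊗[k] H))
        - TensorProduct.mk k (H ⧸ I) H (I.mkQ 1)).lTensor H)) w = 0 := by
      have c1 : ((TensorProduct.mk k (H ⧸ I) H (I.mkQ 1)).lTensor H) =
          ((I.mkQ.rTensor H).lTensor H) ∘ₗ ((TensorProduct.mk k H H 1).lTensor H) := by
        rw [← LinearMap.lTensor_comp]
        congr 1
      have c2 : (((TensorProduct.map I.mkQ (LinearMap.id : H →ₗ[k] H)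
            ∘ₗ (Coalgebra.comul : H →ₗ[k] H ⊗[k] H))).lTensor H) =
          ((I.mkQ.rTensor H).lTensor H) ∘ₗ
            ((Coalgebra.comul : H →ₗ[k] H ⊗[k] H).lTensor H) := by
        rw [← LinearMap.lTensor_comp]
        rfl
      rw [LinearMap.lTensor_sub, LinearMap.sub_apply, c1, c2, LinearMap.comp_apply,
        LinearMap.comp_apply, ← map_sub, ← neg_sub (((TensorProduct.mk k H H 1).lTensor H) w),
        ← hv, map_neg, e5, neg_zero]
    obtain ⟨s', hs'⟩ : w ∈ LinearMap.range ((coinv k H I).subtype.lTensor H) := by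
      rw [← aux_kerD k H I]
      exact LinearMap.mem_ker.mpr e6
    have hz2 : (epsTensorId k H - idTensorEps k H) t =
        LinearMap.mul' k H w - idTensorEps k H w := by
      have := LinearMap.congr_fun (eps_sub_eq k H) t
      simpa [hw] using this
    rw [hz2, ← hs']
    clear hs' hz2 e1 e2 e3 e4 e5 e6 hs hLR ht' hphi
    induction s' using TensorProduct.induction_on with
    | zero => simp
    | tmul h b =>
      rw [LinearMap.lTensor_tmul]
      have hval : LinearMap.mul' k H (h ⊗ₜ[k] ((coinv k H I).subtype b)) -
          idTensorEps k H (h ⊗ₜ[k] ((coinv k H I).subtype b)) =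
          h * ((b : H) - Coalgebra.counit (R := k) (b : H) • 1) := by
        simp only [LinearMap.mul'_apply, idTensorEps, LinearMap.comp_apply,
          TensorProduct.map_tmul, LinearMap.id_coe, id_eq, LinearEquiv.coe_coe,
          TensorProduct.rid_tmul, Submodule.subtype_apply]
        rw [mul_sub, mul_smul_comm, mul_one]
      rw [hval]
      apply Submodule.subset_span
      refine ⟨h, (b : H) - Coalgebra.counit (R := k) (b : H) • 1, ⟨?_, ?_⟩, rfl⟩
      · exact Submodule.sub_mem _ b.2
          (Submodule.smul_mem _ _ (one_mem_coinv k H I))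
      · rw [map_sub, map_smul, Bialgebra.counit_one, smul_eq_mul, mul_one, sub_self]
    | add u1 u2 h1 h2 =>
      rw [map_add]
      have hsplit : ∀ a b : H ⊗[k] H,
          LinearMap.mul' k H (a + b) - idTensorEps k H (a + b) =
          (LinearMap.mul' k H a - idTensorEps k H a) +
            (LinearMap.mul' k H b - idTensorEps k H b) := by
        intro a b
        rw [map_add, map_add]
        abel
      rw [hsplit]
      exact Submodule.add_mem _ h1 h2
  · -- H·(coinv)⁺ ≤ I
    apply Submodule.span_le.mpr
    rintro z ⟨h, b, hb, rfl⟩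
    obtain ⟨hbco, hbe⟩ := hb
    have hbI : b ∈ I := by
      have h0 : (TensorProduct.map I.mkQ (LinearMap.id : H →ₗ[k] H)
          ∘ₗ (Coalgebra.comul : H →ₗ[k] H ⊗[k] H)) b =
          TensorProduct.mk k (H ⧸ I) H (I.mkQ 1) b := by
        have hk := LinearMap.mem_ker.mp (hbco : b ∈ LinearMap.ker _)
        rw [LinearMap.sub_apply, sub_eq_zero] at hk
        exact hk
      have h1 := congrArg ((TensorProduct.rid k (H ⧸ I)).toLinearMap ∘ₗ
        ((Coalgebra.counit : H →ₗ[k] k).lTensor (H ⧸ I))) h0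
      have hL : ((TensorProduct.rid k (H ⧸ I)).toLinearMap ∘ₗ
          ((Coalgebra.counit : H →ₗ[k] k).lTensor (H ⧸ I)))
            ((TensorProduct.map I.mkQ (LinearMap.id : H →ₗ[k] H)
              ∘ₗ (Coalgebra.comul : H →ₗ[k] H ⊗[k] H)) b) = I.mkQ b := by
        rw [LinearMap.comp_apply, LinearMap.comp_apply,
          ← (Coalgebra.Repr.arbitrary k b).eq, map_sum, map_sum, map_sum]
        simp only [TensorProduct.map_tmul, LinearMap.comp_apply,
          LinearMap.lTensor_tmul, LinearEquiv.coe_coe, TensorProduct.rid_tmul,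
          LinearMap.id_coe, id_eq]
        calc ∑ i ∈ (Coalgebra.Repr.arbitrary k b).index,
              Coalgebra.counit (R := k) ((Coalgebra.Repr.arbitrary k b).right i) • I.mkQ ((Coalgebra.Repr.arbitrary k b).left i)
            = I.mkQ (∑ i ∈ (Coalgebra.Repr.arbitrary k b).index,
                Coalgebra.counit (R := k) ((Coalgebra.Repr.arbitrary k b).right i) • (Coalgebra.Repr.arbitrary k b).left i) := by
              rw [map_sum]
              exact Finset.sum_congr rfl fun i _ => (map_smul _ _ _).symm
          _ = I.mkQ b := by rw [sum_counit_right_smul]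
      have hR : ((TensorProduct.rid k (H ⧸ I)).toLinearMap ∘ₗ
          ((Coalgebra.counit : H →ₗ[k] k).lTensor (H ⧸ I)))
            (TensorProduct.mk k (H ⧸ I) H (I.mkQ 1) b) = 0 := by
        simp only [TensorProduct.mk_apply, LinearMap.comp_apply, LinearMap.lTensor_tmul,
          LinearEquiv.coe_coe, TensorProduct.rid_tmul]
        rw [hbe, zero_smul]
      rw [hL, hR] at h1
      rw [← Submodule.Quotient.mk_eq_zero I, ← Submodule.mkQ_apply]
      exact h1
    exact hI.mul_mem_left h b hbI

end HopfGalois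
end
end

section
/- Let k be a field, H a Hopf algebra over k, and I a left ideal coideal of H. Set B := H^{co H/I} (a subalgebra of H). Then B is exactly the equalizer of the two canonical maps H → H ⊗_B H: that is, {h ∈ H : h ⊗ 1 − 1 ⊗ h ∈ J_B} = B. -/
open TensorProduct

noncomputable section

namespace HopfGalois

variable (k : Type*) (H : Type*) [Field k] [Ring H] [HopfAlgebra k H]

section Aux

variable {k H : Type*} [Field k] [Ring H] [HopfAlgebra k H]

/-- The auxiliary map `H ⊗ H → (H/I) ⊗ H`, `x ⊗ y ↦ Σ π(x₁) ⊗ x₂ y`. -/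
def phiMap (I : Submodule k H) : H ⊗[k] H →ₗ[k] (H ⧸ I) ⊗[k] H :=
  TensorProduct.map I.mkQ LinearMap.id ∘ₗ LinearMap.mul' k (H ⊗[k] H) ∘ₗ
    TensorProduct.map (Coalgebra.comul : H →ₗ[k] H ⊗[k] H) (TensorProduct.mk k H H 1)

lemma phiMap_tmul (I : Submodule k H) (x y : H) :
    phiMap I (x ⊗ₜ[k] y) =
      TensorProduct.map I.mkQ LinearMap.id
        ((Coalgebra.comul x : H ⊗[k] H) * ((1 : H) ⊗ₜ[k] y)) := by
  simp [phiMap, LinearMap.mul'_apply]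

lemma phiMap_kill (I : Submodule k H) (hleft : ∀ (h x : H), x ∈ I → h * x ∈ I)
    (u : H ⊗[k] H) (w : (I : Submodule k H) ⊗[k] H) (y : H) :
    TensorProduct.map I.mkQ (LinearMap.id : H →ₗ[k] H)
      (u * (TensorProduct.map I.subtype (LinearMap.id : H →ₗ[k] H) w) * ((1 : H) ⊗ₜ[k] y))
      = 0 := by
  induction w using TensorProduct.induction_on with
  | zero => simp
  | tmul i c =>
    simp only [TensorProduct.map_tmul, LinearMap.id_coe, id_eq, Submodule.coe_subtype]
    induction u using TensorProduct.induction_on with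
    | zero => simp
    | tmul p q =>
      rw [Algebra.TensorProduct.tmul_mul_tmul, Algebra.TensorProduct.tmul_mul_tmul,
        TensorProduct.map_tmul]
      have : I.mkQ (p * (i : H) * 1) = 0 := by
        rw [mul_one]
        simpa [Submodule.Quotient.mk_eq_zero] using hleft p (i : H) i.2
      rw [this, TensorProduct.zero_tmul]
    | add a b ha hb =>
      rw [add_mul, add_mul, map_add, ha, hb, add_zero]
  | add w₁ w₂ h₁ h₂ =>
    rw [map_add, mul_add, add_mul, map_add, h₁, h₂, add_zero]

lemma phiMap_JB_eq_zero (I : Submodule k H) (hI : IsLeftIdealCoideal k H I) :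
    JB k H ((coinv k H I : Submodule k H) : Set H) ≤ LinearMap.ker (phiMap I) := by
  rw [JB, Submodule.span_le]
  rintro z ⟨x, y, b, hb, rfl⟩
  have hb' : TensorProduct.map I.mkQ (LinearMap.id : H →ₗ[k] H)
      ((Coalgebra.comul b : H ⊗[k] H) - (1 : H) ⊗ₜ[k] b) = 0 := by
    have hbk := hb
    rw [SetLike.mem_coe, coinv, LinearMap.mem_ker, LinearMap.sub_apply, LinearMap.comp_apply,
      sub_eq_zero] at hbk
    rw [map_sub, hbk, TensorProduct.map_tmul]
    simp
  -- express `comul b - 1 ⊗ b` as the image of some `w : I ⊗ H`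
  have hker : (Coalgebra.comul b : H ⊗[k] H) - (1 : H) ⊗ₜ[k] b ∈
      LinearMap.ker (LinearMap.rTensor H I.mkQ) := by
    rwa [LinearMap.mem_ker, LinearMap.rTensor]
  rw [rTensor_mkQ] at hker
  obtain ⟨w, hw⟩ := hker
  rw [LinearMap.rTensor] at hw
  simp only [SetLike.mem_coe, LinearMap.mem_ker, map_sub, phiMap_tmul]
  rw [Bialgebra.comul_mul]
  have h1 : ((1 : H) ⊗ₜ[k] (b * y) : H ⊗[k] H) = ((1 : H) ⊗ₜ[k] b) * ((1 : H) ⊗ₜ[k] y) := by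
    rw [Algebra.TensorProduct.tmul_mul_tmul, one_mul]
  rw [h1, ← mul_assoc, sub_eq_zero]
  have key : TensorProduct.map I.mkQ (LinearMap.id : H →ₗ[k] H)
      ((Coalgebra.comul x : H ⊗[k] H) *
        ((Coalgebra.comul b : H ⊗[k] H) - (1 : H) ⊗ₜ[k] b) * ((1 : H) ⊗ₜ[k] y)) = 0 := by
    rw [← hw]
    exact phiMap_kill I hI.mul_mem_left _ w y
  have expand : (Coalgebra.comul x : H ⊗[k] H) *
        ((Coalgebra.comul b : H ⊗[k] H) - (1 : H) ⊗ₜ[k] b) * ((1 : H) ⊗ₜ[k] y)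
      = (Coalgebra.comul x : H ⊗[k] H) * (Coalgebra.comul b : H ⊗[k] H) * ((1 : H) ⊗ₜ[k] y)
        - (Coalgebra.comul x : H ⊗[k] H) * ((1 : H) ⊗ₜ[k] b) * ((1 : H) ⊗ₜ[k] y) := by
    rw [mul_sub, sub_mul]
  rw [expand] at key
  rw [map_sub] at key
  exact sub_eq_zero.mp key

end Aux

/-- For a left ideal coideal `I` and `B := H^{co H/I}`,
`B` is exactly the equalizer of the two canonical maps `H → H ⊗_B H`. -/
theorem coinv_equalizerCond (k H : Type*) [Field k] [Ring H] [HopfAlgebra k H]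
    (I : Submodule k H) (hI : IsLeftIdealCoideal k H I) :
    {h : H | h ⊗ₜ[k] (1 : H) - (1 : H) ⊗ₜ[k] h ∈
        JB k H ((coinv k H I : Submodule k H) : Set H)} =
      ((coinv k H I : Submodule k H) : Set H) := by
  ext h
  simp only [Set.mem_setOf_eq, SetLike.mem_coe]
  constructor
  · intro hmem
    have hphi : phiMap I (h ⊗ₜ[k] (1 : H) - (1 : H) ⊗ₜ[k] h) = 0 :=
      phiMap_JB_eq_zero I hI hmem
    rw [map_sub, phiMap_tmul, phiMap_tmul] at hphi
    have e1 : ((1 : H) ⊗ₜ[k] (1 : H) : H ⊗[k] H) = 1 :=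
      (Algebra.TensorProduct.one_def).symm
    rw [e1, mul_one, Bialgebra.comul_one, one_mul, TensorProduct.map_tmul] at hphi
    simp only [coinv, LinearMap.mem_ker, LinearMap.sub_apply, LinearMap.comp_apply]
    simpa using hphi
  · intro hb
    apply Submodule.subset_span
    refine ⟨1, 1, h, hb, ?_⟩
    rw [one_mul, mul_one]

end HopfGalois
end
end

section
/- Let k be a field, H a Hopf algebra over k with antipode S, and I a left ideal coideal of H. Then for every x ∈ H^{co H/I}, the element Σ x₍₁₎ ⊗ S(x₍₂₎) of H ⊗ H lies in the subspace H^{co H/I} ⊗ H, i.e. in the span of simple tensors b ⊗ h with b ∈ H^{co H/I} and h ∈ H. -/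
open TensorProduct

set_option synthInstance.maxHeartbeats 400000

noncomputable section

namespace HopfGalois

variable (k : Type*) (H : Type*) [Field k] [Ring H] [HopfAlgebra k H]

/-- For a left ideal coideal `I` and `x ∈ H^{co H/I}`, the element
`Σ x₍₁₎ ⊗ S(x₍₂₎)` lies in the subspace `H^{co H/I} ⊗ H` of `H ⊗ H`. -/
theorem comul_antipode_mem_coinv_tensor (k H : Type*) [Field k] [Ring H] [HopfAlgebra k H]
    (I : Submodule k H) (hI : IsLeftIdealCoideal k H I)
    (x : H) (hx : x ∈ coinv k H I) :
    TensorProduct.map (LinearMap.id : H →ₗ[k] H) (HopfAlgebra.antipode k : H →ₗ[k] H)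
        ((Coalgebra.comul : H →ₗ[k] H ⊗[k] H) x) ∈
      LinearMap.range
        (TensorProduct.map (coinv k H I).subtype (LinearMap.id : H →ₗ[k] H)) := by
  classical
  let Δ : H →ₗ[k] H ⊗[k] H := Coalgebra.comul
  let g : H →ₗ[k] (H ⧸ I) ⊗[k] H :=
    TensorProduct.map I.mkQ (LinearMap.id : H →ₗ[k] H) ∘ₗ Δ
  let c : H →ₗ[k] (H ⧸ I) ⊗[k] H := TensorProduct.mk k (H ⧸ I) H (I.mkQ 1)
  let f : H →ₗ[k] (H ⧸ I) ⊗[k] H := g - c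
  have hcoinv : coinv k H I = LinearMap.ker f := rfl
  -- the coinvariance condition
  have hx' : TensorProduct.map I.mkQ (LinearMap.id : H →ₗ[k] H) (Δ x)
      = I.mkQ 1 ⊗ₜ[k] x := by
    have h := hx
    rw [coinv, LinearMap.mem_ker, LinearMap.sub_apply, sub_eq_zero] at h
    simpa [Δ] using h
  -- naturality of the associator
  have nat1 : ∀ w : H ⊗[k] (H ⊗[k] H),
      (TensorProduct.map I.mkQ (LinearMap.id : H →ₗ[k] H)).rTensor H
        ((TensorProduct.assoc k H H H).symm w)
      = (TensorProduct.assoc k (H ⧸ I) H H).symm (I.mkQ.rTensor (H ⊗[k] H) w) := by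
    intro w
    induction w using TensorProduct.induction_on with
    | zero =>
        rw [LinearEquiv.map_zero, LinearMap.map_zero, LinearMap.map_zero,
          LinearEquiv.map_zero]
    | tmul a b =>
        induction b using TensorProduct.induction_on with
        | zero =>
            rw [TensorProduct.tmul_zero, LinearEquiv.map_zero, LinearMap.map_zero,
              LinearMap.map_zero, LinearEquiv.map_zero]
        | tmul b cc => simp
        | add b₁ b₂ h₁ h₂ => simp only [TensorProduct.tmul_add, map_add, h₁, h₂]
    | add w₁ w₂ h₁ h₂ => simp only [map_add, h₁, h₂]
  have nat2 : ∀ z : H ⊗[k] H,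
      c.rTensor H z
        = (TensorProduct.assoc k (H ⧸ I) H H).symm ((I.mkQ 1) ⊗ₜ[k] z) := by
    intro z
    induction z using TensorProduct.induction_on with
    | zero => simp [TensorProduct.tmul_zero]
    | tmul a b => simp [c, LinearMap.rTensor_tmul]
    | add z₁ z₂ h₁ h₂ =>
        simp only [map_add, TensorProduct.tmul_add, h₁, h₂]
  -- key computation: (f ⊗ id)(Δ x) = 0
  have key : f.rTensor H (Δ x) = 0 := by
    have hg : g.rTensor H (Δ x)
        = (TensorProduct.assoc k (H ⧸ I) H H).symm ((I.mkQ 1) ⊗ₜ[k] (Δ x)) := by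
      have h1 : LinearMap.rTensor H g
          = (TensorProduct.map I.mkQ (LinearMap.id : H →ₗ[k] H)).rTensor H
              ∘ₗ Δ.rTensor H := by
        rw [← LinearMap.rTensor_comp]
      have h1' := LinearMap.congr_fun h1 (Δ x)
      simp only [LinearMap.comp_apply] at h1'
      rw [h1', ← Coalgebra.coassoc_symm_apply, nat1]
      congr 1
      have hsw : I.mkQ.rTensor (H ⊗[k] H) ∘ₗ Δ.lTensor H
          = Δ.lTensor (H ⧸ I) ∘ₗ I.mkQ.rTensor H := by
        rw [LinearMap.rTensor_comp_lTensor, LinearMap.lTensor_comp_rTensor]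
      have h2 := LinearMap.congr_fun hsw (Δ x)
      simp only [LinearMap.comp_apply] at h2
      rw [h2]
      have h3 : I.mkQ.rTensor H (Δ x) = I.mkQ 1 ⊗ₜ[k] x := hx'
      rw [h3, LinearMap.lTensor_tmul]
    letI : AddCommGroup (((H ⧸ I) ⊗[k] H) ⊗[k] H) := TensorProduct.addCommGroup
    have hf : f.rTensor H = g.rTensor H - c.rTensor H := LinearMap.rTensor_sub (Q := H) g c
    rw [hf, LinearMap.sub_apply, hg, nat2, sub_self]
  -- the element in question is killed by f ⊗ id
  have hzero : f.rTensor H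
      (TensorProduct.map (LinearMap.id : H →ₗ[k] H)
        (HopfAlgebra.antipode k : H →ₗ[k] H) (Δ x)) = 0 := by
    have hsw : f.rTensor H ∘ₗ (HopfAlgebra.antipode k : H →ₗ[k] H).lTensor H
        = (HopfAlgebra.antipode k : H →ₗ[k] H).lTensor ((H ⧸ I) ⊗[k] H)
            ∘ₗ f.rTensor H := by
      rw [LinearMap.rTensor_comp_lTensor, LinearMap.lTensor_comp_rTensor]
    have h2 := LinearMap.congr_fun hsw (Δ x)
    simp only [LinearMap.comp_apply] at h2
    have hmap : TensorProduct.map (LinearMap.id : H →ₗ[k] H)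
        (HopfAlgebra.antipode k : H →ₗ[k] H) (Δ x)
        = (HopfAlgebra.antipode k : H →ₗ[k] H).lTensor H (Δ x) := rfl
    rw [hmap, h2, key, map_zero]
  -- exactness of tensoring with the flat module H
  have hexact :=
    Module.Flat.rTensor_exact (M := H) (LinearMap.exact_subtype_ker_map f)
  obtain ⟨z, hz⟩ := (hexact _).mp hzero
  exact ⟨z, hz⟩

end HopfGalois
end
end

section
/- Let k be a field, H a Hopf algebra over k, and B a right coideal subalgebra of H. Set I := HB⁺. Then I = H·(H^{co H/I})⁺, the left ideal of H generated by {b ∈ H^{co H/I} : ε(b) = 0}; that is, Φ ∘ Ψ ∘ Φ = Φ for the assignments Ψ(I) = H^{co H/I} and Φ(B) = HB⁺. -/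
open TensorProduct

noncomputable section

namespace HopfGalois

variable (k : Type*) (H : Type*) [Field k] [Ring H] [HopfAlgebra k H]

lemma mul_mem_HSplus (S : Set H) (h : H) {x : H} (hx : x ∈ HSplus k H S) :
    h * x ∈ HSplus k H S := by
  have : Submodule.map (LinearMap.mulLeft k h) (HSplus k H S) ≤ HSplus k H S := by
    rw [HSplus, leftIdealGen, Submodule.map_span, Submodule.span_le]
    rintro z ⟨w, ⟨h', b, hb, rfl⟩, rfl⟩
    exact Submodule.subset_span ⟨h * h', b, hb, (mul_assoc h h' b).symm⟩
  exact this ⟨x, hx, rfl⟩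

lemma sub_smul_one_mem_HSplus (B : Subalgebra k H) {b : H} (hb : b ∈ B) :
    b - (Coalgebra.counit : H →ₗ[k] k) b • 1 ∈ HSplus k H (B : Set H) := by
  apply Submodule.subset_span
  refine ⟨1, b - (Coalgebra.counit : H →ₗ[k] k) b • 1, ⟨?_, ?_⟩, (one_mul _).symm⟩
  · exact sub_mem hb (Subalgebra.smul_mem B (Subalgebra.one_mem B) _)
  · simp [Bialgebra.counit_one]

lemma map_id_map_id {A B C : Type*} [AddCommGroup A] [AddCommGroup B] [AddCommGroup C]
    [Module k A] [Module k B] [Module k C] (f : A →ₗ[k] B) (g : B →ₗ[k] C)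
    (t : A ⊗[k] H) :
    TensorProduct.map g (LinearMap.id : H →ₗ[k] H)
        (TensorProduct.map f (LinearMap.id : H →ₗ[k] H) t)
      = TensorProduct.map (g ∘ₗ f) (LinearMap.id : H →ₗ[k] H) t := by
  rw [← LinearMap.comp_apply, ← TensorProduct.map_comp, LinearMap.id_comp]

lemma subset_coinv (B : Subalgebra k H) (hB : IsRightCoidealSubalgebra k H B) :
    (B : Set H) ⊆ (coinv k H (HSplus k H (B : Set H)) : Set H) := by
  intro b hb
  set I := HSplus k H (B : Set H) with hI
  obtain ⟨t, ht⟩ := hB b hb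
  have key : I.mkQ ∘ₗ (Subalgebra.toSubmodule B).subtype =
      LinearMap.toSpanSingleton k (H ⧸ I) (I.mkQ 1) ∘ₗ
        ((Coalgebra.counit : H →ₗ[k] k) ∘ₗ (Subalgebra.toSubmodule B).subtype) := by
    ext c
    simp only [LinearMap.comp_apply, Submodule.subtype_apply,
      LinearMap.toSpanSingleton_apply]
    rw [← map_smul, ← sub_eq_zero, ← map_sub, Submodule.mkQ_apply,
      Submodule.Quotient.mk_eq_zero]
    exact sub_smul_one_mem_HSplus k H B c.2
  -- membership in coinv
  show b ∈ LinearMap.ker _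
  rw [LinearMap.mem_ker, LinearMap.sub_apply, sub_eq_zero, LinearMap.comp_apply]
  have h2 : TensorProduct.map
        ((Coalgebra.counit : H →ₗ[k] k) ∘ₗ (Subalgebra.toSubmodule B).subtype)
        (LinearMap.id : H →ₗ[k] H) t
      = (1 : k) ⊗ₜ[k] b := by
    rw [← map_id_map_id, ht]
    exact Coalgebra.rTensor_counit_comul (R := k) b
  calc TensorProduct.map I.mkQ (LinearMap.id : H →ₗ[k] H)
        ((Coalgebra.comul : H →ₗ[k] H ⊗[k] H) b)
      = TensorProduct.map (I.mkQ ∘ₗ (Subalgebra.toSubmodule B).subtype)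
          (LinearMap.id : H →ₗ[k] H) t := by rw [← ht, map_id_map_id]
    _ = TensorProduct.map (LinearMap.toSpanSingleton k (H ⧸ I) (I.mkQ 1))
          (LinearMap.id : H →ₗ[k] H)
          (TensorProduct.map
            ((Coalgebra.counit : H →ₗ[k] k) ∘ₗ (Subalgebra.toSubmodule B).subtype)
            (LinearMap.id : H →ₗ[k] H) t) := by rw [map_id_map_id, ← key]
    _ = (TensorProduct.mk k (H ⧸ I) H) (I.mkQ 1) b := by
          rw [h2]
          simp [TensorProduct.mk_apply]

lemma coinv_plus_subset (I : Submodule k H) {x : H} (hx : x ∈ coinv k H I)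
    (hε : (Coalgebra.counit : H →ₗ[k] k) x = 0) : x ∈ I := by
  rw [coinv, LinearMap.mem_ker, LinearMap.sub_apply, sub_eq_zero,
    LinearMap.comp_apply] at hx
  have := congrArg (fun z => (TensorProduct.rid k (H ⧸ I))
    (((Coalgebra.counit : H →ₗ[k] k).lTensor (H ⧸ I)) z)) hx
  beta_reduce at this
  have hL : ((Coalgebra.counit : H →ₗ[k] k).lTensor (H ⧸ I))
        (TensorProduct.map I.mkQ (LinearMap.id : H →ₗ[k] H)
          ((Coalgebra.comul : H →ₗ[k] H ⊗[k] H) x))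
      = TensorProduct.map I.mkQ LinearMap.id
          (((Coalgebra.counit : H →ₗ[k] k).lTensor H)
            ((Coalgebra.comul : H →ₗ[k] H ⊗[k] H) x)) := by
    generalize (Coalgebra.comul : H →ₗ[k] H ⊗[k] H) x = z
    induction z using TensorProduct.induction_on with
    | zero => simp
    | tmul a b => simp
    | add u v hu hv => simp only [map_add, hu, hv]
  rw [hL, Coalgebra.lTensor_counit_comul (R := k) x] at this
  simp only [TensorProduct.mk_apply, LinearMap.lTensor_tmul, TensorProduct.map_tmul,
    LinearMap.id_apply, hε] at this
  rw [TensorProduct.tmul_zero, map_zero, TensorProduct.rid_tmul, one_smul] at this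
  rw [← Submodule.Quotient.mk_eq_zero]
  exact this

/-- For a right coideal subalgebra `B` and `I := HB⁺`,
one has `I = H·(H^{co H/I})⁺`; that is, `Φ ∘ Ψ ∘ Φ = Φ`. -/
theorem HSplus_coinv_HSplus (k H : Type*) [Field k] [Ring H] [HopfAlgebra k H]
    (B : Subalgebra k H) (hB : IsRightCoidealSubalgebra k H B) :
    HSplus k H (B : Set H) =
      HSplus k H ((coinv k H (HSplus k H (B : Set H)) : Submodule k H) : Set H) := by
  set I := HSplus k H (B : Set H) with hI
  apply le_antisymm
  · apply Submodule.span_mono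
    rintro z ⟨h, b, ⟨hbB, hbε⟩, rfl⟩
    exact ⟨h, b, ⟨subset_coinv k H B hB hbB, hbε⟩, rfl⟩
  · rw [HSplus, leftIdealGen, Submodule.span_le]
    rintro z ⟨h, b, ⟨hbc, hbε⟩, rfl⟩
    exact mul_mem_HSplus k H _ h (coinv_plus_subset k H I hbc hbε)

end HopfGalois
end
end

section
/- Let R = ℂ[A,B,C,D]/(AD − BC − 1) with a, b, c, d the images of A, B, C, D, and let B₀ be the ℂ-subalgebra of R generated by a and b. Then B₀ is exactly the equalizer of the two canonical maps R → R ⊗_{B₀} R: that is, {h ∈ R : h ⊗ 1 − 1 ⊗ h ∈ J_{B₀}} = B₀. -/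
set_option maxHeartbeats 1000000
set_option synthInstance.maxHeartbeats 400000


open TensorProduct

noncomputable section

namespace SL2Example

/-- The ideal `(AD − BC − 1)` of `ℂ[A,B,C,D]`. -/
def sl2Ideal : Ideal (MvPolynomial (Fin 4) ℂ) :=
  Ideal.span {MvPolynomial.X 0 * MvPolynomial.X 3 - MvPolynomial.X 1 * MvPolynomial.X 2 - 1}

/-- The coordinate algebra `R = ℂ[A,B,C,D]/(AD − BC − 1)` of `SL₂(ℂ)`. -/
abbrev SL2Ring : Type := MvPolynomial (Fin 4) ℂ ⧸ sl2Ideal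

/-- `a`, the image of `A` in `R`. -/
def aEl : SL2Ring := Ideal.Quotient.mk sl2Ideal (MvPolynomial.X 0)

/-- `b`, the image of `B` in `R`. -/
def bEl : SL2Ring := Ideal.Quotient.mk sl2Ideal (MvPolynomial.X 1)

/-- `c`, the image of `C` in `R`. -/
def cEl : SL2Ring := Ideal.Quotient.mk sl2Ideal (MvPolynomial.X 2)

/-- `d`, the image of `D` in `R`. -/
def dEl : SL2Ring := Ideal.Quotient.mk sl2Ideal (MvPolynomial.X 3)

/-- `B₀ = ℂ[a,b]`, the subalgebra of `R` generated by `a` and `b`. -/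
def B0 : Subalgebra ℂ SL2Ring := Algebra.adjoin ℂ {aEl, bEl}

end SL2Example
namespace SL2Example

/-- `J_{B₀} ⊆ R ⊗ R`, the subspace spanned by `{xw ⊗ y − x ⊗ wy : x, y ∈ R, w ∈ B₀}`,
so that `R ⊗_{B₀} R = (R ⊗ R)/J_{B₀}`. -/
def JB0 : Submodule ℂ (SL2Ring ⊗[ℂ] SL2Ring) :=
  Submodule.span ℂ
    {z : SL2Ring ⊗[ℂ] SL2Ring |
      ∃ x y : SL2Ring, ∃ w ∈ B0, z = (x * w) ⊗ₜ[ℂ] y - x ⊗ₜ[ℂ] (w * y)}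

/-! ### Auxiliary setup -/

open MvPolynomial

abbrev Q2 : Type := MvPolynomial (Fin 2) ℂ
abbrev Q3 : Type := MvPolynomial (Fin 3) ℂ
abbrev KK : Type := FractionRing Q2

def aK : KK := algebraMap Q2 KK (X 0)
def bK : KK := algebraMap Q2 KK (X 1)

lemma algebraMap_Q2_injective : Function.Injective (algebraMap Q2 KK) :=
  IsFractionRing.injective Q2 KK

lemma aK_ne_zero : aK ≠ 0 := by
  simp only [aK, Ne, map_eq_zero_iff _ algebraMap_Q2_injective]
  exact X_ne_zero 0

lemma bK_ne_zero : bK ≠ 0 := by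
  simp only [bK, Ne, map_eq_zero_iff _ algebraMap_Q2_injective]
  exact X_ne_zero 1

def vA : Fin 4 → Polynomial KK
  | 0 => Polynomial.C aK
  | 1 => Polynomial.C bK
  | 2 => Polynomial.X
  | 3 => Polynomial.C aK⁻¹ * (Polynomial.C bK * Polynomial.X + 1)

def vB : Fin 4 → Polynomial KK
  | 0 => Polynomial.C aK
  | 1 => Polynomial.C bK
  | 2 => Polynomial.C bK⁻¹ * (Polynomial.C aK * Polynomial.X - 1)
  | 3 => Polynomial.X

@[simp] lemma vA0 : vA 0 = Polynomial.C aK := rfl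
@[simp] lemma vA1 : vA 1 = Polynomial.C bK := rfl
@[simp] lemma vA2 : vA 2 = Polynomial.X := rfl
@[simp] lemma vA3 : vA 3 = Polynomial.C aK⁻¹ * (Polynomial.C bK * Polynomial.X + 1) := rfl
@[simp] lemma vB0 : vB 0 = Polynomial.C aK := rfl
@[simp] lemma vB1 : vB 1 = Polynomial.C bK := rfl
@[simp] lemma vB2 : vB 2 = Polynomial.C bK⁻¹ * (Polynomial.C aK * Polynomial.X - 1) := rfl
@[simp] lemma vB3 : vB 3 = Polynomial.X := rfl

lemma aeval_vA_rel : (aeval vA) (X 0 * X 3 - X 1 * X 2 - 1 : MvPolynomial (Fin 4) ℂ) = 0 := by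
  simp only [map_sub, map_mul, map_one, aeval_X, vA0, vA1, vA2, vA3]
  rw [show (Polynomial.C aK) * ((Polynomial.C aK⁻¹) * (Polynomial.C bK * Polynomial.X + 1))
      = (Polynomial.C (aK * aK⁻¹)) * (Polynomial.C bK * Polynomial.X + 1) by
    rw [Polynomial.C_mul]; ring]
  rw [mul_inv_cancel₀ aK_ne_zero]
  simp

lemma aeval_vB_rel : (aeval vB) (X 0 * X 3 - X 1 * X 2 - 1 : MvPolynomial (Fin 4) ℂ) = 0 := by
  simp only [map_sub, map_mul, map_one, aeval_X, vB0, vB1, vB2, vB3]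
  rw [show (Polynomial.C bK) * ((Polynomial.C bK⁻¹) * (Polynomial.C aK * Polynomial.X - 1))
      = (Polynomial.C (bK * bK⁻¹)) * (Polynomial.C aK * Polynomial.X - 1) by
    rw [Polynomial.C_mul]; ring]
  rw [mul_inv_cancel₀ bK_ne_zero]
  simp

lemma aeval_mem_zero {v : Fin 4 → Polynomial KK}
    (hv : (aeval v) (X 0 * X 3 - X 1 * X 2 - 1 : MvPolynomial (Fin 4) ℂ) = 0) :
    ∀ F ∈ sl2Ideal, (aeval v) F = 0 := by
  intro F hF
  rw [sl2Ideal, Ideal.mem_span_singleton'] at hF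
  obtain ⟨G, rfl⟩ := hF
  rw [map_mul, hv, mul_zero]

def φA : SL2Ring →ₐ[ℂ] Polynomial KK :=
  Ideal.Quotient.liftₐ sl2Ideal (aeval vA) (aeval_mem_zero aeval_vA_rel)

def φB : SL2Ring →ₐ[ℂ] Polynomial KK :=
  Ideal.Quotient.liftₐ sl2Ideal (aeval vB) (aeval_mem_zero aeval_vB_rel)

@[simp] lemma φA_mk (F : MvPolynomial (Fin 4) ℂ) :
    φA (Ideal.Quotient.mk sl2Ideal F) = aeval vA F := by
  rw [φA, Ideal.Quotient.liftₐ_apply]; rfl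

@[simp] lemma φB_mk (F : MvPolynomial (Fin 4) ℂ) :
    φB (Ideal.Quotient.mk sl2Ideal F) = aeval vB F := by
  rw [φB, Ideal.Quotient.liftₐ_apply]; rfl

@[simp] lemma φA_a : φA aEl = Polynomial.C aK := by simp [aEl, vA]
@[simp] lemma φA_b : φA bEl = Polynomial.C bK := by simp [bEl, vA]
@[simp] lemma φA_c : φA cEl = Polynomial.X := by simp [cEl, vA]
@[simp] lemma φA_d : φA dEl = Polynomial.C aK⁻¹ * (Polynomial.C bK * Polynomial.X + 1) := by
  simp [dEl, vA]

@[simp] lemma φB_a : φB aEl = Polynomial.C aK := by simp [aEl, vB]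
@[simp] lemma φB_b : φB bEl = Polynomial.C bK := by simp [bEl, vB]
@[simp] lemma φB_d : φB dEl = Polynomial.X := by simp [dEl, vB]
@[simp] lemma φB_c : φB cEl = Polynomial.C bK⁻¹ * (Polynomial.C aK * Polynomial.X - 1) := by
  simp [cEl, vB]

lemma rel_abcd : aEl * dEl = bEl * cEl + 1 := by
  have : (Ideal.Quotient.mk sl2Ideal) (X 0 * X 3 - X 1 * X 2 - 1 : MvPolynomial (Fin 4) ℂ) = 0 := by
    rw [Ideal.Quotient.eq_zero_iff_mem]
    exact Ideal.subset_span rfl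
  have h := this
  rw [map_sub, map_sub, map_mul, map_mul, map_one, sub_sub, sub_eq_zero] at h
  rw [show (Ideal.Quotient.mk sl2Ideal (X 0) : SL2Ring) = aEl from rfl] at h
  rw [show (Ideal.Quotient.mk sl2Ideal (X 3) : SL2Ring) = dEl from rfl] at h
  rw [show (Ideal.Quotient.mk sl2Ideal (X 1) : SL2Ring) = bEl from rfl] at h
  rw [show (Ideal.Quotient.mk sl2Ideal (X 2) : SL2Ring) = cEl from rfl] at h
  exact h


/-! ### The embedding of `ℂ[x₀,x₁,x₂]` into `KK[X]` -/

def E3 : Q3 ≃ₐ[ℂ] Polynomial Q2 :=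
  (renameEquiv ℂ (finRotate 3)).trans (finSuccEquiv ℂ 2)

def Ψ : Q3 →ₐ[ℂ] Polynomial KK :=
  (Polynomial.mapAlgHom (IsScalarTower.toAlgHom ℂ Q2 KK)).comp E3.toAlgHom

lemma Ψ_apply (H : Q3) : Ψ H = (E3 H).map (algebraMap Q2 KK) := rfl

lemma Ψ_injective : Function.Injective Ψ := by
  intro x y hxy
  have := Polynomial.map_injective (algebraMap Q2 KK) algebraMap_Q2_injective
    (by simpa [Ψ_apply] using hxy)
  exact E3.injective this

@[simp] lemma E3_X0 : E3 (X 0) = Polynomial.C (X 0) := by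
  simp only [E3, AlgEquiv.trans_apply, renameEquiv_apply, rename_X]
  rw [show (finRotate 3) 0 = (0 : Fin 2).succ from rfl]
  exact finSuccEquiv_X_succ

@[simp] lemma E3_X1 : E3 (X 1) = Polynomial.C (X 1) := by
  simp only [E3, AlgEquiv.trans_apply, renameEquiv_apply, rename_X]
  rw [show (finRotate 3) 1 = (1 : Fin 2).succ from rfl]
  exact finSuccEquiv_X_succ

@[simp] lemma E3_X2 : E3 (X 2) = Polynomial.X := by
  simp only [E3, AlgEquiv.trans_apply, renameEquiv_apply, rename_X]
  rw [show (finRotate 3) 2 = (0 : Fin 3) from rfl]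
  exact finSuccEquiv_X_zero

@[simp] lemma Ψ_X0 : Ψ (X 0) = Polynomial.C aK := by
  rw [Ψ_apply, E3_X0, Polynomial.map_C]; rfl

@[simp] lemma Ψ_X1 : Ψ (X 1) = Polynomial.C bK := by
  rw [Ψ_apply, E3_X1, Polynomial.map_C]; rfl

@[simp] lemma Ψ_X2 : Ψ (X 2) = Polynomial.X := by
  rw [Ψ_apply, E3_X2, Polynomial.map_X]

/-! ### Generators of `R`, and denominator lemmas -/

def θ3A : Q3 →ₐ[ℂ] SL2Ring := aeval ![aEl, bEl, cEl]
def θ3B : Q3 →ₐ[ℂ] SL2Ring := aeval ![aEl, bEl, dEl]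
def θ2 : Q2 →ₐ[ℂ] SL2Ring := aeval ![aEl, bEl]

@[simp] lemma θ3A_X0 : θ3A (X 0) = aEl := by simp [θ3A]
@[simp] lemma θ3A_X1 : θ3A (X 1) = bEl := by simp [θ3A]
@[simp] lemma θ3A_X2 : θ3A (X 2) = cEl := by simp [θ3A]
@[simp] lemma θ3B_X0 : θ3B (X 0) = aEl := by simp [θ3B]
@[simp] lemma θ3B_X1 : θ3B (X 1) = bEl := by simp [θ3B]
@[simp] lemma θ3B_X2 : θ3B (X 2) = dEl := by simp [θ3B]
@[simp] lemma θ2_X0 : θ2 (X 0) = aEl := by simp [θ2]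
@[simp] lemma θ2_X1 : θ2 (X 1) = bEl := by simp [θ2]

lemma mem_adjoin_abcd (x : SL2Ring) : x ∈ Algebra.adjoin ℂ {aEl, bEl, cEl, dEl} := by
  obtain ⟨F, rfl⟩ := Ideal.Quotient.mk_surjective x
  induction F using MvPolynomial.induction_on with
  | C s =>
      exact Subalgebra.algebraMap_mem _ s
  | add F G hF hG =>
      rw [map_add]; exact add_mem hF hG
  | mul_X F i hF =>
      rw [map_mul]
      refine mul_mem hF (Algebra.subset_adjoin ?_)
      fin_cases i <;> simp [aEl, bEl, cEl, dEl]

lemma denomA (x : SL2Ring) : ∃ (n : ℕ) (H : Q3), aEl ^ n * x = θ3A H := by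
  refine Algebra.adjoin_induction ?_ ?_ ?_ ?_ (mem_adjoin_abcd x)
  · intro y hy
    rcases hy with rfl | rfl | rfl | rfl
    · exact ⟨0, X 0, by simp⟩
    · exact ⟨0, X 1, by simp⟩
    · exact ⟨0, X 2, by simp⟩
    · refine ⟨1, X 1 * X 2 + 1, ?_⟩
      simp only [pow_one, map_add, map_mul, map_one, θ3A_X1, θ3A_X2]
      rw [rel_abcd]
  · intro r
    exact ⟨0, MvPolynomial.C r, by simp [θ3A]⟩
  · rintro y z - - ⟨n1, H1, h1⟩ ⟨n2, H2, h2⟩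
    refine ⟨n1 + n2, X 0 ^ n2 * H1 + X 0 ^ n1 * H2, ?_⟩
    have : aEl ^ (n1 + n2) * (y + z) = aEl ^ n2 * (aEl ^ n1 * y) + aEl ^ n1 * (aEl ^ n2 * z) := by
      ring
    rw [this, h1, h2]
    simp only [map_add, map_mul, map_pow, θ3A_X0]
  · rintro y z - - ⟨n1, H1, h1⟩ ⟨n2, H2, h2⟩
    refine ⟨n1 + n2, H1 * H2, ?_⟩
    have : aEl ^ (n1 + n2) * (y * z) = (aEl ^ n1 * y) * (aEl ^ n2 * z) := by ring
    rw [this, h1, h2, map_mul]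

lemma denomB (x : SL2Ring) : ∃ (n : ℕ) (H : Q3), bEl ^ n * x = θ3B H := by
  refine Algebra.adjoin_induction ?_ ?_ ?_ ?_ (mem_adjoin_abcd x)
  · intro y hy
    rcases hy with rfl | rfl | rfl | rfl
    · exact ⟨0, X 0, by simp⟩
    · exact ⟨0, X 1, by simp⟩
    · refine ⟨1, X 0 * X 2 - 1, ?_⟩
      simp only [pow_one, map_sub, map_mul, map_one, θ3B_X0, θ3B_X2]
      have hbc : bEl * cEl = aEl * dEl - 1 := by rw [rel_abcd]; ring
      exact hbc
    · exact ⟨0, X 2, by simp⟩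
  · intro r
    exact ⟨0, MvPolynomial.C r, by simp [θ3B]⟩
  · rintro y z - - ⟨n1, H1, h1⟩ ⟨n2, H2, h2⟩
    refine ⟨n1 + n2, X 1 ^ n2 * H1 + X 1 ^ n1 * H2, ?_⟩
    have : bEl ^ (n1 + n2) * (y + z) = bEl ^ n2 * (bEl ^ n1 * y) + bEl ^ n1 * (bEl ^ n2 * z) := by
      ring
    rw [this, h1, h2]
    simp only [map_add, map_mul, map_pow, θ3B_X1]
  · rintro y z - - ⟨n1, H1, h1⟩ ⟨n2, H2, h2⟩
    refine ⟨n1 + n2, H1 * H2, ?_⟩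
    have : bEl ^ (n1 + n2) * (y * z) = (bEl ^ n1 * y) * (bEl ^ n2 * z) := by ring
    rw [this, h1, h2, map_mul]


/-! ### Compatibility of the maps -/

def Ψ2 : Q2 →ₐ[ℂ] Polynomial KK :=
  Polynomial.CAlgHom.comp (IsScalarTower.toAlgHom ℂ Q2 KK)

@[simp] lemma Ψ2_apply (p : Q2) : Ψ2 p = Polynomial.C (algebraMap Q2 KK p) := rfl

lemma φA_comp_θ3A : φA.comp θ3A = Ψ := by
  apply MvPolynomial.algHom_ext
  intro i
  fin_cases i <;> simp [AlgHom.comp_apply]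

lemma φB_comp_θ3B : φB.comp θ3B = Ψ := by
  apply MvPolynomial.algHom_ext
  intro i
  fin_cases i <;> simp [AlgHom.comp_apply]

lemma φA_comp_θ2 : φA.comp θ2 = Ψ2 := by
  apply MvPolynomial.algHom_ext
  intro i
  fin_cases i <;> simp [AlgHom.comp_apply, aK, bK]

lemma φB_comp_θ2 : φB.comp θ2 = Ψ2 := by
  apply MvPolynomial.algHom_ext
  intro i
  fin_cases i <;> simp [AlgHom.comp_apply, aK, bK]

/-! ### Elements of `B₀` map to constants -/

lemma phi_B0_const (φ : SL2Ring →ₐ[ℂ] Polynomial KK) (ha : φ aEl = Polynomial.C aK)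
    (hb : φ bEl = Polynomial.C bK) {w : SL2Ring} (hw : w ∈ B0) :
    ∃ k : KK, φ w = Polynomial.C k := by
  refine Algebra.adjoin_induction ?_ ?_ ?_ ?_ hw
  · intro y hy
    rcases hy with rfl | rfl
    · exact ⟨aK, ha⟩
    · exact ⟨bK, hb⟩
  · intro r
    exact ⟨algebraMap ℂ KK r, by rw [AlgHom.commutes, Polynomial.algebraMap_apply]⟩
  · rintro y z - - ⟨k1, h1⟩ ⟨k2, h2⟩
    exact ⟨k1 + k2, by rw [map_add, h1, h2, Polynomial.C_add]⟩
  · rintro y z - - ⟨k1, h1⟩ ⟨k2, h2⟩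
    exact ⟨k1 * k2, by rw [map_mul, h1, h2, Polynomial.C_mul]⟩

/-! ### The tensor argument -/

def Lmap (φ : SL2Ring →ₐ[ℂ] Polynomial KK) :
    SL2Ring →ₗ[ℂ] SL2Ring →ₗ[ℂ] Polynomial KK :=
  LinearMap.mk₂ ℂ (fun x y => Polynomial.C ((φ x).coeff 0) * φ y)
    (by intro x x' y; simp [map_add, Polynomial.coeff_add, add_mul])
    (by intro c x y
        simp only [map_smul, Polynomial.coeff_smul, ← Polynomial.smul_C, smul_mul_assoc])
    (by intro x y y'; simp [map_add, mul_add])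
    (by intro c x y; simp [map_smul, mul_smul_comm])

lemma const_of_mem_JB0 (φ : SL2Ring →ₐ[ℂ] Polynomial KK) (ha : φ aEl = Polynomial.C aK)
    (hb : φ bEl = Polynomial.C bK) {h : SL2Ring}
    (hmem : h ⊗ₜ[ℂ] (1 : SL2Ring) - (1 : SL2Ring) ⊗ₜ[ℂ] h ∈ JB0) :
    φ h = Polynomial.C ((φ h).coeff 0) := by
  set T := TensorProduct.lift (Lmap φ) with hT
  have hker : JB0 ≤ LinearMap.ker T := by
    rw [JB0, Submodule.span_le]
    rintro z ⟨x, y, w, hw, rfl⟩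
    obtain ⟨k, hk⟩ := phi_B0_const φ ha hb hw
    simp only [SetLike.mem_coe, LinearMap.mem_ker, map_sub, hT, TensorProduct.lift.tmul]
    simp only [Lmap, LinearMap.mk₂_apply, map_mul, hk, Polynomial.coeff_mul_C,
      Polynomial.C_mul]
    ring
  have h0 : T (h ⊗ₜ[ℂ] (1 : SL2Ring) - (1 : SL2Ring) ⊗ₜ[ℂ] h) = 0 := hker hmem
  rw [map_sub, hT, TensorProduct.lift.tmul, TensorProduct.lift.tmul] at h0
  simp only [Lmap, LinearMap.mk₂_apply, map_one, mul_one, Polynomial.coeff_one_zero,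
    Polynomial.C_1, one_mul, sub_eq_zero] at h0
  exact h0.symm

/-! ### Comparing the two constants -/

lemma eval_comp (x : SL2Ring) :
    Polynomial.aeval (0 : KK) (φA x) = Polynomial.aeval (aK⁻¹) (φB x) := by
  obtain ⟨F, rfl⟩ := Ideal.Quotient.mk_surjective x
  have hhom :
      ((Polynomial.aeval (0 : KK)).toRingHom.comp
        (φA.toRingHom.comp (Ideal.Quotient.mk sl2Ideal))) =
      ((Polynomial.aeval (aK⁻¹ : KK)).toRingHom.comp
        (φB.toRingHom.comp (Ideal.Quotient.mk sl2Ideal))) := by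
    apply MvPolynomial.ringHom_ext
    · intro r
      simp [Polynomial.algebraMap_apply]
    · intro i
      fin_cases i
      · simp
      · simp
      · simp [mul_inv_cancel₀ aK_ne_zero]
      · simp [mul_inv_cancel₀ aK_ne_zero]
  exact RingHom.congr_fun hhom F

/-! ### Primality of `X 0` and `X 1` in `Q2` -/

lemma primeX0 : Prime (X 0 : Q2) := by
  have h2 : Prime ((finSuccEquiv ℂ 1) (X 0)) := by
    rw [finSuccEquiv_X_zero]; exact Polynomial.prime_X
  exact (MulEquiv.prime_iff (finSuccEquiv ℂ 1).toRingEquiv.toMulEquiv).mp h2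

lemma X0_not_dvd_X1 : ¬ (X 0 : Q2) ∣ X 1 := by
  rintro ⟨t, ht⟩
  have := congrArg (eval ![(0 : ℂ), 1]) ht
  simp at this

lemma θ2_mem_B0 (r : Q2) : θ2 r ∈ B0 := by
  induction r using MvPolynomial.induction_on with
  | C s => simpa [θ2] using Subalgebra.algebraMap_mem B0 s
  | add F G hF hG => rw [map_add]; exact add_mem hF hG
  | mul_X F i hF =>
      rw [map_mul]
      refine mul_mem hF (Algebra.subset_adjoin ?_)
      fin_cases i <;> simp

/-! ### Putting it together -/

lemma main_step {h : SL2Ring}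
    (hmem : h ⊗ₜ[ℂ] (1 : SL2Ring) - (1 : SL2Ring) ⊗ₜ[ℂ] h ∈ JB0) : h ∈ B0 := by
  -- `φA h` and `φB h` are the same constant `u`.
  set u : KK := (φA h).coeff 0 with hu
  have hA : φA h = Polynomial.C u := const_of_mem_JB0 φA φA_a φA_b hmem
  have hB' : φB h = Polynomial.C ((φB h).coeff 0) := const_of_mem_JB0 φB φB_a φB_b hmem
  have huB : (φB h).coeff 0 = u := by
    have := eval_comp h
    rw [hA, hB'] at this
    simpa using this.symm
  have hB : φB h = Polynomial.C u := by rw [hB', huB]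
  -- denominators
  obtain ⟨n, H, hn⟩ := denomA h
  obtain ⟨m, G, hm⟩ := denomB h
  have hΨH : Ψ H = Polynomial.C (aK ^ n * u) := by
    have := congrArg φA hn
    rw [map_mul, map_pow, φA_a, hA] at this
    rw [← AlgHom.comp_apply, φA_comp_θ3A] at this
    rw [← this, ← Polynomial.C_pow, ← Polynomial.C_mul]
  have hΨG : Ψ G = Polynomial.C (bK ^ m * u) := by
    have := congrArg φB hm
    rw [map_mul, map_pow, φB_b, hB] at this
    rw [← AlgHom.comp_apply, φB_comp_θ3B] at this
    rw [← this, ← Polynomial.C_pow, ← Polynomial.C_mul]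
  -- extract polynomial numerators
  have hp : aK ^ n * u = algebraMap Q2 KK ((E3 H).coeff 0) := by
    have h0 : algebraMap Q2 KK ((E3 H).coeff 0) = aK ^ n * u := by
      rw [← Polynomial.coeff_map, ← Ψ_apply, hΨH, Polynomial.coeff_C_zero]
    exact h0.symm
  have hq : bK ^ m * u = algebraMap Q2 KK ((E3 G).coeff 0) := by
    have h0 : algebraMap Q2 KK ((E3 G).coeff 0) = bK ^ m * u := by
      rw [← Polynomial.coeff_map, ← Ψ_apply, hΨG, Polynomial.coeff_C_zero]
    exact h0.symm
  set p : Q2 := (E3 H).coeff 0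
  set q : Q2 := (E3 G).coeff 0
  -- cross-multiplying
  have hcross : (X 1 : Q2) ^ m * p = (X 0 : Q2) ^ n * q := by
    apply algebraMap_Q2_injective
    rw [map_mul, map_mul, map_pow, map_pow, ← hp, ← hq]
    show (algebraMap Q2 KK (X 1)) ^ m * (aK ^ n * u) = (algebraMap Q2 KK (X 0)) ^ n * (bK ^ m * u)
    rw [show algebraMap Q2 KK (X 1) = bK from rfl, show algebraMap Q2 KK (X 0) = aK from rfl]
    ring
  -- `X 0 ^ n` divides `p`
  have hdvd : (X 0 : Q2) ^ n ∣ p := by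
    refine primeX0.pow_dvd_of_dvd_mul_left n
      (fun hdvd1 => X0_not_dvd_X1 (primeX0.dvd_of_dvd_pow hdvd1)) ⟨q, hcross⟩
  obtain ⟨r, hr⟩ := hdvd
  -- `u` is a polynomial in `a, b`
  have hur : u = algebraMap Q2 KK r := by
    have : aK ^ n * u = aK ^ n * algebraMap Q2 KK r := by
      rw [hp, hr, map_mul, map_pow]
      rfl
    exact mul_left_cancel₀ (pow_ne_zero n aK_ne_zero) this
  -- the candidate element of `B0`
  set hB0 : SL2Ring := θ2 r with hhB0
  have hmemB0 : hB0 ∈ B0 := θ2_mem_B0 r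
  -- `φA` and `φB` agree on `h` and `hB0`
  have hφA0 : φA (h - hB0) = 0 := by
    rw [map_sub, hA, hhB0, ← AlgHom.comp_apply, φA_comp_θ2, Ψ2_apply, ← hur, sub_self]
  have hφB0 : φB (h - hB0) = 0 := by
    rw [map_sub, hB, hhB0, ← AlgHom.comp_apply, φB_comp_θ2, Ψ2_apply, ← hur, sub_self]
  -- kill the difference
  set x : SL2Ring := h - hB0 with hx
  obtain ⟨n', H', hn'⟩ := denomA x
  obtain ⟨m', G', hm'⟩ := denomB x
  have ha0 : aEl ^ n' * x = 0 := by
    have hH'0 : H' = 0 := by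
      apply Ψ_injective
      rw [map_zero]
      have := congrArg φA hn'
      rw [map_mul, map_pow, φA_a, hφA0, mul_zero, ← AlgHom.comp_apply, φA_comp_θ3A] at this
      exact this.symm
    rw [hn', hH'0, map_zero]
  have hb0 : bEl ^ m' * x = 0 := by
    have hG'0 : G' = 0 := by
      apply Ψ_injective
      rw [map_zero]
      have := congrArg φB hm'
      rw [map_mul, map_pow, φB_b, hφB0, mul_zero, ← AlgHom.comp_apply, φB_comp_θ3B] at this
      exact this.symm
    rw [hm', hG'0, map_zero]
  -- `1 ∈ (a, b)`, hence `1 ∈ (a^n', b^m')`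
  have h1 : (1 : SL2Ring) ∈ Ideal.span {aEl, bEl} :=
    Ideal.mem_span_pair.mpr ⟨dEl, -cEl, by linear_combination rel_abcd⟩
  have h2 : (1 : SL2Ring) ∈ Ideal.span {aEl ^ n'} ⊔ Ideal.span {bEl ^ m'} := by
    have hsp : Ideal.span {aEl, bEl} = Ideal.span {aEl} ⊔ Ideal.span {bEl} := by
      rw [Ideal.span_insert]
    have hpow : (1 : SL2Ring) ∈ (Ideal.span {aEl} ⊔ Ideal.span {bEl}) ^ (n' + m') := by
      rw [← hsp]
      simpa using Ideal.pow_mem_pow h1 (n' + m')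
    have := Ideal.sup_pow_add_le_pow_sup_pow (I := Ideal.span {aEl}) (J := Ideal.span {bEl})
      (n := n') (m := m') hpow
    rwa [Ideal.span_singleton_pow, Ideal.span_singleton_pow] at this
  obtain ⟨y, hy, z, hz, hyz⟩ := Submodule.mem_sup.mp h2
  obtain ⟨ty, hty⟩ := Ideal.mem_span_singleton'.mp hy
  obtain ⟨tz, htz⟩ := Ideal.mem_span_singleton'.mp hz
  have hx0 : x = 0 := by
    calc x = x * 1 := (mul_one x).symm
    _ = x * (ty * aEl ^ n' + tz * bEl ^ m') := by rw [hty, htz, hyz]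
    _ = ty * (aEl ^ n' * x) + tz * (bEl ^ m' * x) := by ring
    _ = 0 := by rw [ha0, hb0]; ring
  have hfin : h = hB0 := by
    have := hx0
    rw [hx, sub_eq_zero] at this
    exact this
  rw [hfin]
  exact hmemB0

/-- `B₀` is exactly the equalizer of the two canonical maps
`R → R ⊗_{B₀} R`. -/
theorem sl2_equalizer_eq_B0 :
    {h : SL2Ring |
        h ⊗ₜ[ℂ] (1 : SL2Ring) - (1 : SL2Ring) ⊗ₜ[ℂ] h ∈ JB0} = (B0 : Set SL2Ring) := by
  ext h
  constructor
  · intro hmem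
    exact main_step hmem
  · intro hb
    refine Submodule.subset_span ⟨1, 1, h, hb, ?_⟩
    rw [one_mul, mul_one]


end SL2Example
end
end
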